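/- arXiv:0904.2960 — 10 statements merged into one kernel-verified Lean document; each statement's English description precedes it below -/
import Mathlib

section
/- Let S be a real d×d' matrix and let v : ℝ_{>0}^d → ℝ^{d'} be continuously differentiable with v'(x) entrywise nonnegative for all x in the positive orthant, satisfying the reaction form condition: the partial derivative ∂v_j/∂x_i is not identically zero if and only if S_{ij} < 0. If S contains no 2×2 submatrix whose sign pattern, up to permutation of rows and columns, equals [[+,-],[-,-]], then for every pair (i,j), the entry (S v'(x))_{ij} has the same sign (≥0 everywhere or ≤0 everywhere) for all x in the positive orthant. -/
/-- The 2×2 sign pattern with one positive and three negative entries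
(the pattern `[[+,-],[-,-]]` up to permutation of rows and columns). -/
def BadPattern3 (a b c d : ℝ) : Prop :=
  (0 < a ∧ b < 0 ∧ c < 0 ∧ d < 0) ∨ (a < 0 ∧ 0 < b ∧ c < 0 ∧ d < 0) ∨
  (a < 0 ∧ b < 0 ∧ 0 < c ∧ d < 0) ∨ (a < 0 ∧ b < 0 ∧ c < 0 ∧ 0 < d)

/-- If the stoichiometric matrix `S` of a reaction form ODE with monotone
nondecreasing fluxes contains no 2×2 submatrix whose sign pattern, up to
permutation of rows and columns, equals `[[+,-],[-,-]]`, then each entry of the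
Jacobian `S v'(x)` has the same sign for all `x` in the positive orthant. -/
theorem jacobian_sign_pattern_of_no_bad_submatrix {d d' : ℕ}
    (S : Matrix (Fin d) (Fin d') ℝ)
    (v : (Fin d → ℝ) → (Fin d' → ℝ))
    (J : (Fin d → ℝ) → Matrix (Fin d') (Fin d) ℝ)
    -- `J x` is the Jacobian `v'(x)` of the continuously differentiable `v` at `x`
    (hderiv : ∀ x : Fin d → ℝ, (∀ a, 0 < x a) →
      HasFDerivAt v (LinearMap.toContinuousLinearMap ((J x).mulVecLin)) x)
    -- the fluxes are monotone nondecreasing: `v'(x)` is entrywise nonnegative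
    (hmono : ∀ x : Fin d → ℝ, (∀ a, 0 < x a) → ∀ j i, 0 ≤ J x j i)
    -- reaction form: `∂v_j/∂x_i` is not identically zero iff `S i j < 0`
    (hreact : ∀ (i : Fin d) (j : Fin d'),
      (¬ ∀ x : Fin d → ℝ, (∀ a, 0 < x a) → J x j i = 0) ↔ S i j < 0)
    -- no bad 2×2 submatrix
    (hbad : ∀ i j : Fin d, ∀ k l : Fin d', i ≠ j → k ≠ l →
      ¬ BadPattern3 (S i k) (S i l) (S j k) (S j l)) :
    ∀ i j : Fin d,
      (∀ x : Fin d → ℝ, (∀ a, 0 < x a) → 0 ≤ (S * J x) i j) ∨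
      (∀ x : Fin d → ℝ, (∀ a, 0 < x a) → (S * J x) i j ≤ 0) := by
  intro i j
  by_cases hcase : ∃ k, S j k < 0 ∧ 0 < S i k
  · left
    intro x hx
    rw [Matrix.mul_apply]
    apply Finset.sum_nonneg
    intro k _
    by_cases hjk : S j k < 0
    · have hik : 0 ≤ S i k := by
        by_contra hneg
        push_neg at hneg
        obtain ⟨k0, hk0, hik0⟩ := hcase
        have hij : i ≠ j := by
          rintro rfl; exact absurd hik0 (not_lt.2 hk0.le)
        have hkl : k0 ≠ k := by
          rintro rfl; exact absurd hik0 (not_lt.2 hneg.le)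
        exact hbad i j k0 k hij hkl (Or.inl ⟨hik0, hneg, hk0, hjk⟩)
      exact mul_nonneg hik (hmono x hx k j)
    · have h0 : ∀ y : Fin d → ℝ, (∀ a, 0 < y a) → J y k j = 0 := by
        by_contra h; exact hjk ((hreact j k).1 h)
      simp [h0 x hx]
  · right
    push_neg at hcase
    intro x hx
    rw [Matrix.mul_apply]
    apply Finset.sum_nonpos
    intro k _
    by_cases hjk : S j k < 0
    · exact mul_nonpos_iff.2 (Or.inr ⟨hcase k hjk, hmono x hx k j⟩)
    · have h0 : ∀ y : Fin d → ℝ, (∀ a, 0 < y a) → J y k j = 0 := by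
        by_contra h; exact hjk ((hreact j k).1 h)
      simp [h0 x hx]
end

section
/- Let S be a real d×d' matrix and let Š be the (d+1)×(d'+1) matrix obtained from S by the sign fixing step: choose a column ℓ and row p with S_{pℓ} > 0; Š agrees with S except that Š_{pℓ} = 0, the new row d+1 has a 1 in column ℓ, the entry -1 in column d'+1, and zeros elsewhere, and the new column d'+1 has S_{pℓ} in row p and zeros in rows 1,...,d except row p. Then dim ker Š = dim ker S and dim ker Š^t = dim ker S^t. -/
open Matrix

/-- The sign fixing step applied to `S` at the position `(p, l)`:
the entry at `(p, l)` is zeroed out, the new row `d+1` is `e_l - e_{d'+1}`,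
and the new column `d'+1` has `S p l` in row `p` and zeros elsewhere. -/
def signFixMat {d d' : ℕ} (S : Matrix (Fin d) (Fin d') ℝ) (p : Fin d) (l : Fin d') :
    Matrix (Fin (d + 1)) (Fin (d' + 1)) ℝ :=
  Matrix.of fun i j =>
    if hi : (i : ℕ) < d then
      if hj : (j : ℕ) < d' then
        if (i : ℕ) = (p : ℕ) ∧ (j : ℕ) = (l : ℕ) then 0 else S ⟨i, hi⟩ ⟨j, hj⟩
      else if (i : ℕ) = (p : ℕ) then S p l else 0
    else
      if hj : (j : ℕ) < d' then (if (j : ℕ) = (l : ℕ) then 1 else 0)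
      else -1

/-- The linear map `x ↦ Fin.snoc x (c x)`. -/
def snocL {n : ℕ} (c : (Fin n → ℝ) →ₗ[ℝ] ℝ) : (Fin n → ℝ) →ₗ[ℝ] (Fin (n + 1) → ℝ) where
  toFun x := Fin.snoc x (c x)
  map_add' x y := by
    funext j
    refine Fin.lastCases ?_ ?_ j <;> simp
  map_smul' r x := by
    funext j
    refine Fin.lastCases ?_ ?_ j <;> simp

/-- If the kernel of `A` consists of the vectors `(x, c x)` with `x ∈ ker B`, then the
kernels of `A` and `B` have the same dimension. -/
theorem finrank_ker_aux {m n : ℕ} (A : Matrix (Fin (m + 1)) (Fin (n + 1)) ℝ)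
    (B : Matrix (Fin m) (Fin n) ℝ) (c : (Fin n → ℝ) →ₗ[ℝ] ℝ)
    (h : ∀ v : Fin (n + 1) → ℝ, A.mulVec v = 0 ↔
      (B.mulVec (v ∘ Fin.castSucc) = 0 ∧ v (Fin.last n) = c (v ∘ Fin.castSucc))) :
    Module.finrank ℝ (LinearMap.ker A.mulVecLin)
      = Module.finrank ℝ (LinearMap.ker B.mulVecLin) := by
  have hsc : ∀ x : Fin n → ℝ, (Fin.snoc x (c x) : Fin (n + 1) → ℝ) ∘ Fin.castSucc = x := by
    intro x; funext j; simp
  apply LinearEquiv.finrank_eq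
  refine LinearEquiv.ofLinear
    ((LinearMap.funLeft ℝ ℝ Fin.castSucc).restrict (p := LinearMap.ker A.mulVecLin)
      (q := LinearMap.ker B.mulVecLin) ?_)
    ((snocL c).restrict (p := LinearMap.ker B.mulVecLin) (q := LinearMap.ker A.mulVecLin) ?_)
    ?_ ?_
  · intro v hv
    rw [LinearMap.mem_ker, mulVecLin_apply] at hv ⊢
    exact ((h v).1 hv).1
  · intro x hx
    rw [LinearMap.mem_ker, mulVecLin_apply] at hx ⊢
    rw [h]
    refine ⟨?_, ?_⟩
    · rw [show (snocL c x) ∘ Fin.castSucc = x from hsc x]; exact hx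
    · rw [show (snocL c x) ∘ Fin.castSucc = x from hsc x]
      simp [snocL]
  · ext ⟨x, hx⟩
    simp only [LinearMap.coe_comp, Function.comp_apply, LinearMap.restrict_apply,
      LinearMap.id_coe, id_eq]
    simp [snocL, LinearMap.funLeft]
  · ext ⟨v, hv⟩ j
    simp only [LinearMap.coe_comp, Function.comp_apply, LinearMap.restrict_apply,
      LinearMap.id_coe, id_eq]
    rw [LinearMap.mem_ker, mulVecLin_apply, h] at hv
    refine Fin.lastCases ?_ ?_ j
    · simp only [snocL, LinearMap.funLeft, LinearMap.coe_mk, AddHom.coe_mk, Fin.snoc_last]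
      exact hv.2.symm
    · intro i; simp [snocL, LinearMap.funLeft]

section entries

variable {d d' : ℕ} (S : Matrix (Fin d) (Fin d') ℝ) (p : Fin d) (l : Fin d')

lemma sf1 (i : Fin d) (j : Fin d') :
    signFixMat S p l i.castSucc j.castSucc = if i = p ∧ j = l then 0 else S i j := by
  simp [signFixMat, i.isLt, j.isLt, Fin.val_eq_val]

lemma sf2 (i : Fin d) :
    signFixMat S p l i.castSucc (Fin.last d') = if i = p then S p l else 0 := by
  simp [signFixMat, i.isLt, Fin.val_eq_val, Fin.last]

lemma sf3 (j : Fin d') :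
    signFixMat S p l (Fin.last d) j.castSucc = if j = l then 1 else 0 := by
  simp [signFixMat, j.isLt, Fin.val_eq_val, Fin.last]

lemma sf4 : signFixMat S p l (Fin.last d) (Fin.last d') = -1 := by
  simp [signFixMat, Fin.last]

lemma sf_row (v : Fin (d' + 1) → ℝ) (i : Fin d) :
    (signFixMat S p l).mulVec v i.castSucc
      = S.mulVec (v ∘ Fin.castSucc) i
        + (if i = p then S p l * (v (Fin.last d') - v (Fin.castSucc l)) else 0) := by
  simp only [Matrix.mulVec, dotProduct, Fin.sum_univ_castSucc, sf1, sf2,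
    Function.comp_apply]
  by_cases hip : i = p
  · subst hip
    simp only [true_and, if_pos rfl]
    have key : ∀ j ∈ Finset.univ, (if j = l then (0:ℝ) else S i j) * v j.castSucc
        = S i j * v j.castSucc - (if j = l then S i l * v l.castSucc else 0) := by
      intro j _
      by_cases hjl : j = l
      · subst hjl; simp
      · simp [hjl]
    rw [Finset.sum_congr rfl key, Finset.sum_sub_distrib, Finset.sum_ite_eq']
    simp
    ring
  · simp [hip]

lemma sf_lastrow (v : Fin (d' + 1) → ℝ) :
    (signFixMat S p l).mulVec v (Fin.last d)
      = v (Fin.castSucc l) - v (Fin.last d') := by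
  simp only [Matrix.mulVec, dotProduct, Fin.sum_univ_castSucc, sf3, sf4, ite_mul,
    one_mul, zero_mul]
  rw [Finset.sum_ite_eq']
  simp
  ring

lemma sf_col (w : Fin (d + 1) → ℝ) (j : Fin d') :
    (signFixMat S p l)ᵀ.mulVec w j.castSucc
      = Sᵀ.mulVec (w ∘ Fin.castSucc) j
        + (if j = l then (w (Fin.last d) - S p l * w (Fin.castSucc p)) else 0) := by
  simp only [Matrix.mulVec, dotProduct, Fin.sum_univ_castSucc, Matrix.transpose_apply,
    sf1, sf3, Function.comp_apply, ite_mul, one_mul, zero_mul]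
  by_cases hjl : j = l
  · subst hjl
    simp only [and_true, if_pos rfl]
    have key : ∀ i ∈ Finset.univ, (if i = p then (0:ℝ) else S i j * w i.castSucc)
        = S i j * w i.castSucc - (if i = p then S p j * w p.castSucc else 0) := by
      intro i _
      by_cases hip : i = p
      · subst hip; simp
      · simp [hip]
    rw [Finset.sum_congr rfl key, Finset.sum_sub_distrib, Finset.sum_ite_eq']
    simp
    ring
  · simp [hjl]

lemma sf_lastcol (w : Fin (d + 1) → ℝ) :
    (signFixMat S p l)ᵀ.mulVec w (Fin.last d')
      = S p l * w (Fin.castSucc p) - w (Fin.last d) := by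
  simp only [Matrix.mulVec, dotProduct, Fin.sum_univ_castSucc, Matrix.transpose_apply,
    sf2, sf4, ite_mul, zero_mul]
  rw [Finset.sum_ite_eq']
  simp
  ring

lemma sf_ker_iff (v : Fin (d' + 1) → ℝ) :
    (signFixMat S p l).mulVec v = 0 ↔
      (S.mulVec (v ∘ Fin.castSucc) = 0 ∧ v (Fin.last d') = v (Fin.castSucc l)) := by
  constructor
  · intro hv
    have h0 : ∀ i, (signFixMat S p l).mulVec v i = 0 := fun i => congrFun hv i
    have hl : v (Fin.last d') = v (Fin.castSucc l) := by
      have := h0 (Fin.last d); rw [sf_lastrow] at this; linarith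
    refine ⟨funext fun i => ?_, hl⟩
    have := h0 i.castSucc
    rw [sf_row, hl, sub_self, mul_zero, ite_self, add_zero] at this
    simpa using this
  · rintro ⟨h1, h2⟩
    funext i
    rw [Pi.zero_apply]
    refine Fin.lastCases ?_ (fun i => ?_) i
    · rw [sf_lastrow, h2, sub_self]
    · rw [sf_row, h2, sub_self, mul_zero, ite_self, add_zero, h1, Pi.zero_apply]

lemma sf_ker_iff' (w : Fin (d + 1) → ℝ) :
    (signFixMat S p l)ᵀ.mulVec w = 0 ↔
      (Sᵀ.mulVec (w ∘ Fin.castSucc) = 0 ∧ w (Fin.last d) = S p l * w (Fin.castSucc p)) := by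
  constructor
  · intro hw
    have h0 : ∀ j, (signFixMat S p l)ᵀ.mulVec w j = 0 := fun j => congrFun hw j
    have hl : w (Fin.last d) = S p l * w (Fin.castSucc p) := by
      have := h0 (Fin.last d'); rw [sf_lastcol] at this; linarith
    refine ⟨funext fun j => ?_, hl⟩
    have := h0 j.castSucc
    rw [sf_col, hl, sub_self, ite_self, add_zero] at this
    simpa using this
  · rintro ⟨h1, h2⟩
    funext j
    rw [Pi.zero_apply]
    refine Fin.lastCases ?_ (fun j => ?_) j
    · rw [sf_lastcol, h2, sub_self]
    · rw [sf_col, h2, sub_self, ite_self, add_zero, h1, Pi.zero_apply]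

end entries

/-- Sign fixing preserves the dimensions of the kernel and of the left kernel. -/
theorem signFix_ker_dims {d d' : ℕ} (S : Matrix (Fin d) (Fin d') ℝ)
    (p : Fin d) (l : Fin d') (hpl : 0 < S p l) :
    Module.finrank ℝ (LinearMap.ker (signFixMat S p l).mulVecLin)
      = Module.finrank ℝ (LinearMap.ker S.mulVecLin) ∧
    Module.finrank ℝ (LinearMap.ker (signFixMat S p l)ᵀ.mulVecLin)
      = Module.finrank ℝ (LinearMap.ker Sᵀ.mulVecLin) := by
  constructor
  · apply finrank_ker_aux (c := LinearMap.proj l)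
    intro v
    rw [sf_ker_iff]
    simp
  · apply finrank_ker_aux (c := S p l • LinearMap.proj p)
    intro w
    rw [sf_ker_iff']
    simp
end

section
/- With S and Š as in the sign fixing step (Š_{pℓ}=0, new row d+1 equal to e_ℓ^t - e_{d'+1}^t appropriately, new column d'+1 equal to S_{pℓ}·e_p - e_{d+1}): for every v ∈ ker S there is a unique v_∞ ∈ ℝ such that the vector (v, v_∞) lies in ker Š, namely v_∞ = v_ℓ; conversely if (v, v_∞) ∈ ker Š then v ∈ ker S. Moreover v has all entries positive (respectively nonnegative) if and only if (v, v_ℓ) does. -/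
lemma row_cast {d d' : ℕ} (S : Matrix (Fin d) (Fin d') ℝ) (p : Fin d) (l : Fin d')
    (v : Fin d' → ℝ) (c : ℝ) (i : Fin d) :
    (signFixMat S p l).mulVec (Fin.snoc v c) i.castSucc
      = S.mulVec v i + (if i = p then S p l * (c - v l) else 0) := by
  simp only [Matrix.mulVec, dotProduct]
  rw [Fin.sum_univ_castSucc]
  simp only [signFixMat, Matrix.of_apply, Fin.snoc_castSucc, Fin.snoc_last,
    Fin.coe_castSucc, Fin.val_last, Fin.is_lt, dif_pos, lt_irrefl, dif_neg, not_lt.mpr (le_refl d')]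
  simp only [Fin.eta]
  by_cases hip : i = p
  · subst hip
    simp only [if_pos rfl, and_true, true_and]
    have : ∀ j : Fin d', (if (j : ℕ) = (l : ℕ) then (0:ℝ) else S i j) * v j
        = S i j * v j - (if j = l then S i l * v l else 0) := by
      intro j
      by_cases h : j = l
      · subst h; simp
      · simp [h, Fin.val_eq_val, h]
    simp only [this, Finset.sum_sub_distrib, Finset.sum_ite_eq' Finset.univ l, Finset.mem_univ,
      if_pos, dif_neg not_false]
    ring
  · have hip' : (i : ℕ) ≠ (p : ℕ) := fun h => hip (Fin.ext h)
    simp only [hip', false_and, if_false, if_neg hip', if_neg hip, dif_neg not_false]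
    ring

lemma row_last {d d' : ℕ} (S : Matrix (Fin d) (Fin d') ℝ) (p : Fin d) (l : Fin d')
    (v : Fin d' → ℝ) (c : ℝ) :
    (signFixMat S p l).mulVec (Fin.snoc v c) (Fin.last d) = v l - c := by
  simp only [Matrix.mulVec, dotProduct]
  rw [Fin.sum_univ_castSucc]
  simp only [signFixMat, Matrix.of_apply, Fin.snoc_castSucc, Fin.snoc_last,
    Fin.coe_castSucc, Fin.val_last, Fin.is_lt, dif_pos, dif_neg (not_lt.mpr (le_refl d)),
    dif_neg (not_lt.mpr (le_refl d'))]
  have : ∀ j : Fin d', (if (j : ℕ) = (l : ℕ) then (1:ℝ) else 0) * v j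
      = if j = l then v l else 0 := by
    intro j; by_cases h : j = l
    · subst h; simp
    · simp [h, Fin.val_eq_val]
  simp only [this, Finset.sum_ite_eq' Finset.univ l, Finset.mem_univ, if_pos]
  ring

/-- Correspondence of kernels under the sign fixing step: every `v ∈ ker S`
extends uniquely, by appending `v l`, to a vector in `ker Š`; conversely any
vector `(v, v_∞) ∈ ker Š` has `v ∈ ker S`.  Positivity (resp. nonnegativity)
of entries is preserved under this correspondence. -/
theorem signFix_ker_correspondence {d d' : ℕ} (S : Matrix (Fin d) (Fin d') ℝ)
    (p : Fin d) (l : Fin d') (hpl : 0 < S p l) :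
    (∀ v : Fin d' → ℝ, S.mulVec v = 0 →
      ∃! c : ℝ, (signFixMat S p l).mulVec (Fin.snoc v c) = 0) ∧
    (∀ v : Fin d' → ℝ, S.mulVec v = 0 →
      (signFixMat S p l).mulVec (Fin.snoc v (v l)) = 0) ∧
    (∀ (v : Fin d' → ℝ) (c : ℝ),
      (signFixMat S p l).mulVec (Fin.snoc v c) = 0 → S.mulVec v = 0) ∧
    (∀ v : Fin d' → ℝ, S.mulVec v = 0 →
      ((∀ i, 0 < v i) ↔ ∀ i, 0 < (Fin.snoc v (v l) : Fin (d' + 1) → ℝ) i)) ∧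
    (∀ v : Fin d' → ℝ, S.mulVec v = 0 →
      ((∀ i, 0 ≤ v i) ↔ ∀ i, 0 ≤ (Fin.snoc v (v l) : Fin (d' + 1) → ℝ) i)) := by
  have mem : ∀ v : Fin d' → ℝ, S.mulVec v = 0 →
      (signFixMat S p l).mulVec (Fin.snoc v (v l)) = 0 := by
    intro v hv
    funext i
    induction i using Fin.lastCases with
    | last => rw [row_last]; simp
    | cast i =>
      rw [row_cast]
      simp [congrFun hv i]
  refine ⟨?_, mem, ?_, ?_, ?_⟩
  · intro v hv
    refine ⟨v l, mem v hv, fun c hc => ?_⟩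
    have := congrFun hc (Fin.last d)
    rw [row_last] at this
    simp only [Pi.zero_apply] at this
    linarith
  · intro v c hc
    have hcl : c = v l := by
      have := congrFun hc (Fin.last d)
      rw [row_last] at this
      simp only [Pi.zero_apply] at this
      linarith
    funext i
    have := congrFun hc i.castSucc
    rw [row_cast] at this
    subst hcl
    simpa using this
  · intro v _
    constructor
    · intro h i
      induction i using Fin.lastCases with
      | last => simpa using h l
      | cast i => simpa using h i
    · intro h i
      have := h i.castSucc
      simpa using this
  · intro v _
    constructor
    · intro h i
      induction i using Fin.lastCases with
      | last => simpa using h l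
      | cast i => simpa using h i
    · intro h i
      have := h i.castSucc
      simpa using this
end

section
/- With S and Š as in the sign fixing step: if there exists m ∈ ℝ^d with all entries strictly positive and m^t S = 0, then there exists m̌ ∈ ℝ^{d+1} with all entries strictly positive and m̌^t Š = 0. In other words, if S is conserving then so is Š. -/
open Matrix

/-- If `S` is conserving (there is a strictly positive vector in the left
kernel of `S`), then so is its sign fixing matrix. -/
theorem signFix_conserving {d d' : ℕ} (S : Matrix (Fin d) (Fin d') ℝ)
    (p : Fin d) (l : Fin d') (hpl : 0 < S p l)
    (m : Fin d → ℝ) (hm : ∀ i, 0 < m i) (hker : Sᵀ.mulVec m = 0) :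
    ∃ m' : Fin (d + 1) → ℝ, (∀ i, 0 < m' i) ∧ (signFixMat S p l)ᵀ.mulVec m' = 0 := by
  have hk : ∀ j', ∑ i, S i j' * m i = 0 := by
    intro j'
    have := congrFun hker j'
    simpa [Matrix.mulVec, dotProduct, transpose_apply] using this
  refine ⟨fun i => if h : (i : ℕ) < d then m ⟨i, h⟩ else m p * S p l, ?_, ?_⟩
  · intro i
    by_cases h : (i : ℕ) < d <;> simp [h]
    · exact hm _
    · exact mul_pos (hm p) hpl
  · funext j
    simp only [Matrix.mulVec, dotProduct, transpose_apply, Pi.zero_apply]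
    rw [Fin.sum_univ_castSucc]
    simp only [signFixMat, Matrix.of_apply, Fin.coe_castSucc, Fin.is_lt, dif_pos,
      Fin.val_last, lt_irrefl, dif_neg (lt_irrefl d), Fin.eta]
    by_cases hj : (j : ℕ) < d'
    · set j' : Fin d' := ⟨j, hj⟩ with hj'
      by_cases hjl : (j : ℕ) = (l : ℕ)
      · have hj'l : j' = l := Fin.ext hjl
        have hsum : ∀ i : Fin d,
            (if (i : ℕ) = (p : ℕ) ∧ (j : ℕ) = (l : ℕ) then (0:ℝ) else S i j') * m i
              = S i j' * m i - (if i = p then S p l * m p else 0) := by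
          intro i
          by_cases hip : i = p
          · simp [hip, hjl, hj'l]
          · have : ¬ ((i : ℕ) = (p : ℕ)) := fun h => hip (Fin.ext h)
            simp [hip, this]
        simp only [dif_pos hj, ← hj', hsum]
        rw [Finset.sum_sub_distrib, hk, Finset.sum_ite_eq' Finset.univ p]
        simp [hjl]
        ring
      · have hsum : ∀ i : Fin d,
            (if (i : ℕ) = (p : ℕ) ∧ (j : ℕ) = (l : ℕ) then (0:ℝ) else S i j') * m i
              = S i j' * m i := by
          intro i; simp [hjl]
        simp only [dif_pos hj, ← hj', hsum, hk j', if_neg hjl]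
        simp
    · have hsum : ∀ i : Fin d,
          (if (i : ℕ) = (p : ℕ) then S p l else (0:ℝ)) * m i
            = (if i = p then S p l * m i else 0) := by
        intro i
        by_cases hip : i = p
        · simp [hip]
        · have : ¬ ((i : ℕ) = (p : ℕ)) := fun h => hip (Fin.ext h)
          simp [hip, this]
      simp only [dif_neg hj, hsum]
      rw [Finset.sum_ite_eq' Finset.univ p]
      simp
      ring
end

section
/- Let S be a real d×d' matrix with S_{pℓ} > 0 and Š its sign fixing matrix. Suppose v : ℝ_{>0}^{d} → ℝ_{>0}^{d'} and v̌ : ℝ_{>0}^{d+1} → ℝ_{>0}^{d'+1} are flux maps such that v̌(x, x_∞)_i = v(x)_i for i = 1,...,d' except that v̌(x,x_∞)_ℓ = v(x)_ℓ, and v̌(x,x_∞)_{d'+1} = k·x_∞ for a fixed constant k > 0. Then Š v̌(x, x_∞) = 0 if and only if S v(x) = 0 and k·x_∞ = v(x)_ℓ. In particular, the positive equilibria of the two systems are in bijection via (x) ↦ (x, v(x)_ℓ/k). -/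
/-- Equilibria of the original CRN and of its sign fixed CRN correspond: with
fluxes `v̌(x, x_∞) = (v(x), k·x_∞)`, one has `Š v̌(x, x_∞) = 0` iff `S v(x) = 0`
and `k·x_∞ = v(x)_l`; in particular `x ↦ (x, v(x)_l / k)` is the bijection on
positive equilibria. -/
theorem signFix_equilibria {d d' : ℕ} (S : Matrix (Fin d) (Fin d') ℝ)
    (p : Fin d) (l : Fin d') (hpl : 0 < S p l)
    (v : (Fin d → ℝ) → (Fin d' → ℝ)) (k : ℝ) (hk : 0 < k)
    (hv : ∀ x : Fin d → ℝ, (∀ a, 0 < x a) → ∀ j, 0 < v x j) :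
    ∀ (x : Fin d → ℝ) (xInf : ℝ), (∀ a, 0 < x a) → 0 < xInf →
      ((signFixMat S p l).mulVec (Fin.snoc (v x) (k * xInf)) = 0 ↔
        (S.mulVec (v x) = 0 ∧ k * xInf = v x l)) := by
  intro x xInf hx hxInf
  set w : Fin d' → ℝ := v x with hw
  have hmv : ∀ i : Fin (d + 1),
      (signFixMat S p l).mulVec (Fin.snoc w (k * xInf)) i =
        if hi : (i : ℕ) < d then
          S.mulVec w ⟨i, hi⟩ +
            (if (i : ℕ) = (p : ℕ) then S p l * (k * xInf - w l) else 0)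
        else w l - k * xInf := by
    intro i
    simp only [Matrix.mulVec, dotProduct, signFixMat, Matrix.of_apply]
    rw [Fin.sum_univ_castSucc]
    simp only [Fin.snoc_castSucc, Fin.snoc_last, Fin.coe_castSucc, Fin.val_last,
      Fin.is_lt, dif_pos, lt_irrefl, dite_false, Fin.eta]
    by_cases hi : (i : ℕ) < d
    · simp only [dif_pos hi]
      by_cases hip : (i : ℕ) = (p : ℕ)
      · have hpeq : (⟨(i : ℕ), hi⟩ : Fin d) = p := Fin.ext hip
        simp only [hip, hpeq, if_true, and_true, true_and]
        have hsum : ∑ j : Fin d',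
            (if (j : ℕ) = (l : ℕ) then (0 : ℝ) else S p j) * w j
              = (∑ j : Fin d', S p j * w j) - S p l * w l := by
          have h1 : ∀ j : Fin d',
              (if (j : ℕ) = (l : ℕ) then (0 : ℝ) else S p j) * w j
                = S p j * w j - (if j = l then S p j * w j else 0) := by
            intro j
            by_cases hjl : (j : ℕ) = (l : ℕ)
            · have hje : j = l := Fin.ext hjl
              simp [hjl, hje]
            · have hje : ¬ j = l := fun h => hjl (congrArg Fin.val h)
              simp [hjl, hje]
          rw [Finset.sum_congr rfl (fun j _ => h1 j), Finset.sum_sub_distrib,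
            Finset.sum_ite_eq' Finset.univ l (fun j => S p j * w j)]
          simp
        rw [hsum]
        ring
      · have : ∀ j : Fin d', ¬ ((i : ℕ) = (p : ℕ) ∧ (j : ℕ) = (l : ℕ)) := by
          intro j h; exact hip h.1
        simp only [hip, if_false, false_and, zero_mul, add_zero]
    · simp only [dif_neg hi]
      have hsum : ∑ j : Fin d', (if ((j : ℕ) = (l : ℕ)) then (1 : ℝ) else 0) * w j
          = w l := by
        rw [Finset.sum_eq_single l]
        · simp
        · intro b _ hb
          rw [if_neg (fun h => hb (Fin.ext h)), zero_mul]
        · simp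
      rw [hsum]
      ring
  constructor
  · intro h
    have h0 : ∀ i : Fin (d + 1),
        (signFixMat S p l).mulVec (Fin.snoc w (k * xInf)) i = 0 := fun i =>
      congrFun h i
    have hlastrow := h0 (Fin.last d)
    rw [hmv] at hlastrow
    rw [dif_neg (by simp)] at hlastrow
    have hkx : k * xInf = w l := by linarith
    refine ⟨?_, hkx⟩
    funext i
    have hi := h0 (Fin.castSucc i)
    rw [hmv] at hi
    rw [dif_pos (by simpa using i.isLt)] at hi
    have heta : (⟨((Fin.castSucc i : Fin (d+1)) : ℕ), by simpa using i.isLt⟩ : Fin d) = i :=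
      Fin.ext (by simp)
    rw [heta] at hi
    by_cases hip : ((Fin.castSucc i : Fin (d+1)) : ℕ) = (p : ℕ)
    · rw [if_pos hip, hkx, sub_self, mul_zero, add_zero] at hi
      exact hi
    · rw [if_neg hip, add_zero] at hi
      exact hi
  · rintro ⟨hSv, hkx⟩
    funext i
    rw [hmv]
    by_cases hi : (i : ℕ) < d
    · rw [dif_pos hi, congrFun hSv ⟨(i : ℕ), hi⟩, hkx, sub_self, mul_zero]
      simp
    · rw [dif_neg hi, ← hkx]
      simp
end

section
/- Let J be a real d×d matrix, s ∈ ℝ, w = (w_1, ..., w_d) ∈ ℝ^d a row vector, and for k > 0 define the (d+1)×(d+1) matrix J̌_k whose top-left d×d block is J minus (s·e_d)·w added to row d (explicitly: rows 1..d-1 of J̌_k are rows of J with a 0 appended; row d is (J_{d,1}-s·w_1, ..., J_{d,d}-s·w_d, k·s); row d+1 is (w_1, ..., w_d, -k)). Let c(λ) = det(J - λI) and c_k(λ) = det(J̌_k - λI). Then there is a polynomial h(λ) of degree at most d-1, independent of k, such that c_k(λ) = (-k - λ)·c(λ) + s·λ·h(λ). -/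
open Matrix Polynomial

/-- The Jacobian of the sign fixed CRN: rows `0, …, n-1` are those of `J` with a
zero appended; row `n` (the last row of `J`) is `(J_{n,·} - s·w, k·s)`; the new
row `n+1` is `(w, -k)`. -/
def signFixJac {n : ℕ} (J : Matrix (Fin (n + 1)) (Fin (n + 1)) ℝ)
    (s k : ℝ) (w : Fin (n + 1) → ℝ) :
    Matrix (Fin (n + 2)) (Fin (n + 2)) ℝ :=
  Matrix.of fun i j =>
    if hi : (i : ℕ) < n + 1 then
      if hj : (j : ℕ) < n + 1 then
        J ⟨i, hi⟩ ⟨j, hj⟩ - (if (i : ℕ) = n then s * w ⟨j, hj⟩ else 0)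
      else (if (i : ℕ) = n then k * s else 0)
    else
      if hj : (j : ℕ) < n + 1 then w ⟨j, hj⟩ else -k

/-- The characteristic-type polynomial `det (M - λ·I)` of a square matrix. -/
noncomputable def detLam {m : ℕ} (M : Matrix (Fin m) (Fin m) ℝ) : Polynomial ℝ :=
  (M.map Polynomial.C - (Polynomial.X : Polynomial ℝ) • (1 : Matrix (Fin m) (Fin m) (Polynomial ℝ))).det

/-- There is a polynomial `h` of degree at most `d - 1`, independent of `k`,
with `c_k(λ) = (-k - λ)·c(λ) + s·λ·h(λ)`, where `c(λ) = det (J - λI)` and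
`c_k(λ) = det (J̌_k - λI)`. -/
theorem signFixJac_charpoly_identity {n : ℕ}
    (J : Matrix (Fin (n + 1)) (Fin (n + 1)) ℝ) (s : ℝ) (w : Fin (n + 1) → ℝ) :
    ∃ h : Polynomial ℝ, h.degree ≤ (n : ℕ) ∧ ∀ k : ℝ, 0 < k →
      detLam (signFixJac J s k w) =
        (- C k - X) * detLam J + C s * X * h := by
  classical
  set A : Matrix (Fin (n+1)) (Fin (n+1)) (Polynomial ℝ) :=
    J.map C - (X : Polynomial ℝ) • 1 with hA
  have hAentry : ∀ i j, A i j = C (J i j) - X * (if i = j then 1 else 0) := by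
    intro i j
    simp [hA, Matrix.sub_apply, Matrix.smul_apply, Matrix.one_apply, Matrix.map_apply,
      smul_eq_mul]
  set E : Matrix (Fin (n+1)) (Fin (n+1)) (Polynomial ℝ) :=
    A.updateRow (Fin.last n) (fun j => C (w j)) with hEdef
  have hEentry : ∀ i j, E i j =
      if i = Fin.last n then C (w j) else C (J i j) - X * (if i = j then 1 else 0) := by
    intro i j
    by_cases hi : i = Fin.last n
    · simp [hEdef, hi]
    · simp [hEdef, Matrix.updateRow_ne hi, hi, hAentry]
  refine ⟨E.det, ?_, ?_⟩
  · -- degree bound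
    rw [← natDegree_le_iff_degree_le, Matrix.det_apply']
    refine natDegree_sum_le_of_forall_le _ _ fun σ _ => ?_
    refine (natDegree_mul_le).trans ?_
    have h1 : natDegree ((Equiv.Perm.sign σ : ℤ) : Polynomial ℝ) = 0 := natDegree_intCast _
    rw [h1, zero_add]
    refine (natDegree_prod_le _ _).trans ?_
    calc ∑ i, (E (σ i) i).natDegree
        ≤ ∑ i, (if σ i = Fin.last n then 0 else 1) := by
          refine Finset.sum_le_sum fun i _ => ?_
          rw [hEentry]
          split
          · simp
          · refine (natDegree_sub_le _ _).trans ?_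
            split_ifs <;> simp
      _ = ∑ j, (if j = Fin.last n then 0 else 1) :=
          Fintype.sum_equiv σ _ _ (fun i => rfl)
      _ = n := by
          rw [Finset.sum_ite, Finset.sum_const, Finset.sum_const]
          simp [Finset.filter_ne', Finset.card_erase_of_mem]
  · intro k hk
    have hpn : (n : ℕ) < n + 2 := by omega
    set p : Fin (n+2) := ⟨n, hpn⟩ with hp
    set q : Fin (n+2) := Fin.last (n+1) with hq
    have hpv : (p : ℕ) = n := rfl
    have hqv : (q : ℕ) = n + 1 := rfl
    have hpq : p ≠ q := by
      intro h
      have h2 := congrArg Fin.val h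
      rw [hpv, hqv] at h2
      omega
    have hmk1 : ∀ (i : Fin (n+1)) (h : ((Fin.castSucc i : Fin (n+2)) : ℕ) < n + 1),
        (⟨((Fin.castSucc i : Fin (n+2)) : ℕ), h⟩ : Fin (n+1)) = i := fun i h => Fin.ext (by simp)
    set M : Matrix (Fin (n+2)) (Fin (n+2)) (Polynomial ℝ) :=
      (signFixJac J s k w).map C - (X : Polynomial ℝ) • 1 with hM
    have hMentry : ∀ i j, M i j = C (signFixJac J s k w i j) - X * (if i = j then 1 else 0) := by
      intro i j
      simp [hM, Matrix.sub_apply, Matrix.smul_apply, Matrix.one_apply, Matrix.map_apply,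
        smul_eq_mul]
    have hzero : ∀ i : Fin (n+2), i ≠ p → i ≠ q → M i q = 0 := by
      intro i hip hiq
      have hvq : (i : ℕ) ≠ n + 1 := by
        intro h
        exact hiq (by rw [hq]; exact Fin.ext (by simp [Fin.val_last, h]))
      have hi1 : (i : ℕ) < n + 1 := by
        have h2 := i.isLt
        omega
      have hin : (i : ℕ) ≠ n := fun h => hip (Fin.ext (by simp [hp, h]))
      rw [hMentry]
      have : signFixJac J s k w i q = 0 := by
        simp [signFixJac, hi1, hq, hin]
        intro h; omega
      rw [this, if_neg hiq]
      simp
    have key : M.det = (-1 : Polynomial ℝ)^((p:ℕ) + (q:ℕ)) * M p q *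
          (M.submatrix p.succAbove q.succAbove).det
        + (-1 : Polynomial ℝ)^((q:ℕ) + (q:ℕ)) * M q q *
          (M.submatrix q.succAbove q.succAbove).det := by
      have h1 := Finset.sum_subset (Finset.subset_univ ({p, q} : Finset (Fin (n+2))))
        (f := fun (i : Fin (n+2)) => (-1 : Polynomial ℝ)^((i:ℕ)+(q:ℕ)) * M i q *
          (M.submatrix i.succAbove q.succAbove).det)
        (by
          intro x _ hx
          have hxp : x ≠ p := fun h => hx (by simp [h])
          have hxq : x ≠ q := fun h => hx (by simp [h])
          rw [hzero x hxp hxq]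
          ring)
      rw [Matrix.det_succ_column M q, ← h1, Finset.sum_pair hpq]
    have hMpq : M p q = C (k * s) := by
      rw [hMentry, if_neg hpq]
      have : signFixJac J s k w p q = k * s := by
        simp [signFixJac, hp, hq]
      rw [this]
      simp
    have hMqq : M q q = C (-k) - X := by
      rw [hMentry, if_pos rfl]
      have : signFixJac J s k w q q = -k := by
        simp [signFixJac, hq]
      rw [this]
      simp
    have hsubp : M.submatrix p.succAbove q.succAbove = E := by
      ext i j
      rw [Matrix.submatrix_apply, hq, Fin.succAbove_last, hEentry, hMentry]
      by_cases hi : (i : ℕ) < n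
      · have hsa : p.succAbove i = Fin.castSucc i := by
          refine Fin.succAbove_of_castSucc_lt p i ?_
          simp [hp, Fin.lt_def, hi]
        have hine : i ≠ Fin.last n := by
          intro h
          have h2 := congrArg Fin.val h
          simp only [Fin.val_last] at h2
          omega
        rw [hsa, if_neg hine]
        have h1 : signFixJac J s k w (Fin.castSucc i) (Fin.castSucc j) = J i j := by
          simp only [signFixJac, Matrix.of_apply]
          rw [dif_pos (show ((Fin.castSucc i : Fin (n+2)) : ℕ) < n + 1 by simp; omega),
            dif_pos (show ((Fin.castSucc j : Fin (n+2)) : ℕ) < n + 1 by simp; omega),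
            if_neg (show ¬ ((Fin.castSucc i : Fin (n+2)) : ℕ) = n by simp; omega)]
          rw [hmk1, hmk1, sub_zero]
        rw [h1]
        simp only [Fin.castSucc_inj]
      · have hieq : i = Fin.last n := by
          have h2 := i.isLt
          exact Fin.ext (by simp only [Fin.val_last]; omega)
        have hsa : p.succAbove i = i.succ := by
          refine Fin.succAbove_of_le_castSucc p i ?_
          simp [hp, Fin.le_def]; omega
        rw [hsa, if_pos hieq]
        have hne : i.succ ≠ Fin.castSucc j := by
          intro h
          have h2 := congrArg Fin.val h
          simp only [Fin.val_succ, Fin.coe_castSucc] at h2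
          have h3 := j.isLt
          have h4 := i.isLt
          omega
        have h1 : signFixJac J s k w i.succ (Fin.castSucc j) = w j := by
          simp only [signFixJac, Matrix.of_apply]
          rw [dif_neg (show ¬ ((i.succ : Fin (n+2)) : ℕ) < n + 1 by
              simp only [Fin.val_succ]; omega),
            dif_pos (show ((Fin.castSucc j : Fin (n+2)) : ℕ) < n + 1 by simp; omega)]
          rw [hmk1]
        rw [h1, if_neg hne]
        simp
    have hsubq : (M.submatrix q.succAbove q.succAbove).det = A.det - C s * E.det := by
      have hB : M.submatrix q.succAbove q.succAbove =
          A.updateRow (Fin.last n)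
            ((A (Fin.last n)) + (-(C s)) • (fun j => C (w j))) := by
        ext i j
        rw [Matrix.submatrix_apply, hq, Fin.succAbove_last, hMentry]
        by_cases hi : i = Fin.last n
        · subst hi
          rw [Matrix.updateRow_self]
          have h1 : signFixJac J s k w (Fin.castSucc (Fin.last n)) (Fin.castSucc j)
              = J (Fin.last n) j - s * w j := by
            simp only [signFixJac, Matrix.of_apply]
            rw [dif_pos (show ((Fin.castSucc (Fin.last n) : Fin (n+2)) : ℕ) < n + 1 by simp),
              dif_pos (show ((Fin.castSucc j : Fin (n+2)) : ℕ) < n + 1 by simp; omega),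
              if_pos (show ((Fin.castSucc (Fin.last n) : Fin (n+2)) : ℕ) = n by simp)]
            rw [hmk1, hmk1]
          rw [h1]
          simp only [Pi.add_apply, Pi.smul_apply, smul_eq_mul, hAentry, map_sub, C_mul,
            Fin.castSucc_inj]
          ring
        · rw [Matrix.updateRow_ne hi, hAentry]
          have hin : ((Fin.castSucc i : Fin (n+2)) : ℕ) ≠ n := by
            have : (i : ℕ) ≠ n := fun h => hi (Fin.ext (by simp [Fin.val_last, h]))
            simpa using this
          have h1 : signFixJac J s k w (Fin.castSucc i) (Fin.castSucc j) = J i j := by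
            simp only [signFixJac, Matrix.of_apply]
            rw [dif_pos (show ((Fin.castSucc i : Fin (n+2)) : ℕ) < n + 1 by simp; omega),
              dif_pos (show ((Fin.castSucc j : Fin (n+2)) : ℕ) < n + 1 by simp; omega),
              if_neg hin]
            rw [hmk1, hmk1, sub_zero]
          rw [h1]
          simp only [Fin.castSucc_inj]
      rw [hB, Matrix.det_updateRow_add, Matrix.updateRow_eq_self,
        Matrix.det_updateRow_smul, ← hEdef]
      ring
    have hdL : detLam (signFixJac J s k w) = M.det := by rw [detLam, hM]
    have hdJ : detLam J = A.det := by rw [detLam, hA]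
    have hpow1 : ((-1 : Polynomial ℝ))^((p:ℕ) + (q:ℕ)) = -1 := by
      have h2 : (p:ℕ) + (q:ℕ) = 2*n + 1 := by
        simp [hp, hq, Fin.val_last]; ring
      rw [h2, pow_succ, pow_mul]
      simp
    have hpow2 : ((-1 : Polynomial ℝ))^((q:ℕ) + (q:ℕ)) = 1 := by
      have h2 : (q:ℕ) + (q:ℕ) = 2*(n+1) := by
        simp [hq, Fin.val_last]; ring
      rw [h2, pow_mul]
      simp
    rw [hdL, hdJ, key, hMpq, hMqq, hsubp, hsubq, hpow1, hpow2, C_mul, C_neg]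
    ring
end

section
/- Let J be a real d×d stable matrix (all eigenvalues have negative real part) and let J̌_k be the (d+1)×(d+1) matrix from the sign fixing construction with rate constant k. Then for all sufficiently large k, J̌_k is stable; conversely if J has an eigenvalue with positive real part then J̌_k is unstable for all sufficiently large k. -/
open Matrix Polynomial

/-- A real square matrix is stable if every complex eigenvalue (root of its
characteristic polynomial over `ℂ`) has strictly negative real part. -/
def IsStableMat {m : ℕ} (M : Matrix (Fin m) (Fin m) ℝ) : Prop :=
  ∀ z ∈ (M.map (algebraMap ℝ ℂ)).charpoly.roots, z.re < 0

noncomputable def gPoly {n : ℕ} (J : Matrix (Fin (n + 1)) (Fin (n + 1)) ℝ)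
    (w : Fin (n + 1) → ℝ) : Polynomial ℝ :=
  ((charmatrix J).updateRow (Fin.last n) (fun j => C (w j))).det

section blocks
variable {n : ℕ} (J : Matrix (Fin (n + 1)) (Fin (n + 1)) ℝ) (s k : ℝ) (w : Fin (n + 1) → ℝ)

noncomputable def sfTL : Matrix (Fin (n + 1)) (Fin (n + 1)) ℝ :=
  fun i j => J i j - if i = Fin.last n then s * w j else 0
noncomputable def sfTR : Matrix (Fin (n + 1)) (Fin 1) ℝ :=
  fun i _ => if i = Fin.last n then k * s else 0
noncomputable def sfBL : Matrix (Fin 1) (Fin (n + 1)) ℝ := fun _ j => w j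
noncomputable def sfBR : Matrix (Fin 1) (Fin 1) ℝ := fun _ _ => -k

def sfe {n : ℕ} : (Fin (n+1) ⊕ Fin 1) ≃ Fin (n+2) := finSumFinEquiv

lemma signFixJac_submatrix :
    (signFixJac J s k w).submatrix sfe sfe
      = fromBlocks (sfTL J s w) (sfTR s k) (sfBL w) (sfBR k) := by
  ext i j
  cases i with
  | inl i =>
    cases j with
    | inl j =>
      have hi : (((sfe (Sum.inl i)) : Fin (n+2)) : ℕ) < n + 1 := by simp [sfe, Fin.is_le]
      have hj : (((sfe (Sum.inl j)) : Fin (n+2)) : ℕ) < n + 1 := by simp [sfe, Fin.is_le]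
      simp [sfe, signFixJac, fromBlocks, sfTL, hi, hj, Fin.ext_iff, Fin.last, Fin.is_le]
    | inr j =>
      have hi : (((sfe (Sum.inl i)) : Fin (n+2)) : ℕ) < n + 1 := by simp [sfe, Fin.is_le]
      have hj : ¬ (((sfe (Sum.inr j)) : Fin (n+2)) : ℕ) < n + 1 := by simp [sfe]
      simp [sfe, signFixJac, fromBlocks, sfTR, hi, hj, Fin.ext_iff, Fin.last, Fin.is_le, not_lt.2 (Fin.is_le i)]
  | inr i =>
    cases j with
    | inl j =>
      have hi : ¬ (((sfe (Sum.inr i)) : Fin (n+2)) : ℕ) < n + 1 := by simp [sfe]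
      have hj : (((sfe (Sum.inl j)) : Fin (n+2)) : ℕ) < n + 1 := by simp [sfe, Fin.is_le]
      simp [sfe, signFixJac, fromBlocks, sfBL, hi, hj, Fin.is_le, not_lt.2 (Fin.is_le j)]
    | inr j =>
      have hi : ¬ (((sfe (Sum.inr i)) : Fin (n+2)) : ℕ) < n + 1 := by simp [sfe]
      have hj : ¬ (((sfe (Sum.inr j)) : Fin (n+2)) : ℕ) < n + 1 := by simp [sfe]
      simp [sfe, signFixJac, fromBlocks, sfBR, hi, hj]

end blocks

section ident
variable {n : ℕ} (J : Matrix (Fin (n + 1)) (Fin (n + 1)) ℝ) (s k : ℝ) (w : Fin (n + 1) → ℝ)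

lemma charpoly_signFixJac :
    (signFixJac J s k w).charpoly = (X + C k) * J.charpoly + C s * X * gPoly J w := by
  have h0 : (signFixJac J s k w).charpoly
      = (fromBlocks (sfTL J s w) (sfTR s k) (sfBL w) (sfBR k)).charpoly := by
    rw [← signFixJac_submatrix J s k w]
    have h1 : (signFixJac J s k w).submatrix ⇑sfe ⇑sfe
        = reindex sfe.symm sfe.symm (signFixJac J s k w) := by
      rw [reindex_apply, Equiv.symm_symm]
    rw [h1, charpoly_reindex]
  rw [h0, charpoly, charmatrix_fromBlocks]
  set TL := charmatrix (sfTL J s w) with hTL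
  set BLm : Matrix (Fin 1) (Fin (n+1)) ℝ[X] := -(sfBL w (n := n)).map C with hBLm
  set F := fromBlocks TL (-(sfTR s k (n := n)).map C) BLm (charmatrix (sfBR k)) with hF
  set u : (Fin (n+1) ⊕ Fin 1) → ℝ[X] :=
    Sum.elim (fun i => if i = Fin.last n then -C (k*s) else 0) (fun _ => C k) with hu
  set u' : (Fin (n+1) ⊕ Fin 1) → ℝ[X] :=
    Sum.elim (fun i => if i = Fin.last n then -C s else 0) (fun _ => 1) with hu'
  set v : (Fin (n+1) ⊕ Fin 1) → ℝ[X] :=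
    Sum.elim (fun _ => 0) (fun _ => X) with hv
  have hcol : (fun i' => F i' (Sum.inr 0)) = u + v := by
    funext i
    cases i with
    | inl i => simp [hF, hu, hv, fromBlocks, sfTR, apply_ite (fun x : ℝ => -C x)]
    | inr i =>
      have hi0 : i = 0 := Subsingleton.elim _ _
      subst hi0
      simp [hF, hu, hv, fromBlocks, sfBR, charmatrix_apply, diagonal]
      ring
  have hsplit : F.det = (F.updateCol (Sum.inr 0) u).det + (F.updateCol (Sum.inr 0) v).det := by
    rw [← det_updateCol_add]
    congr 1
    rw [← hcol]
    exact (updateCol_eq_self F _).symm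
  -- the v part
  have hvmat : F.updateCol (Sum.inr 0) v
      = fromBlocks TL 0 BLm (of fun _ _ => X) := by
    ext i j
    cases j with
    | inl j =>
      cases i <;> simp [updateCol_apply, hF, fromBlocks]
    | inr j =>
      have : j = 0 := Subsingleton.elim _ _
      subst this
      cases i <;> simp [updateCol_apply, hv, fromBlocks]
  have hvdet : (F.updateCol (Sum.inr 0) v).det = TL.det * X := by
    rw [hvmat, det_fromBlocks_zero₁₂, det_fin_one, of_apply]
  -- the u part
  have huu : u = C k • u' := by
    funext i
    cases i with
    | inl i =>
      by_cases h : i = Fin.last n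
      · simp only [hu, hu', Sum.elim_inl, if_pos h, Pi.smul_apply, smul_eq_mul, mul_neg, ← C_mul]
      · simp [hu, hu', h]
    | inr i => simp [hu, hu']
  have hudet1 : (F.updateCol (Sum.inr 0) u).det
      = C k * (F.updateCol (Sum.inr 0) u').det := by
    rw [huu, det_updateCol_smul]
  set N' := F.updateCol (Sum.inr 0) u' with hN'
  have hrowop : N'.det
      = (N'.updateRow (Sum.inl (Fin.last n))
          (N' (Sum.inl (Fin.last n)) + C s • N' (Sum.inr 0))).det :=
    (det_updateRow_add_smul_self N' (by simp) (C s)).symm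
  have hNfinal : N'.updateRow (Sum.inl (Fin.last n))
          (N' (Sum.inl (Fin.last n)) + C s • N' (Sum.inr 0))
      = fromBlocks (charmatrix J) 0 BLm (of fun _ _ => 1) := by
    ext i j
    cases i with
    | inl i =>
      by_cases hi : i = Fin.last n
      · subst hi
        rw [updateRow_self]
        cases j with
        | inl j =>
          have h1 : N' (Sum.inl (Fin.last n)) (Sum.inl j) = TL (Fin.last n) j := by
            simp [hN', updateCol_apply, hF, fromBlocks]
          have h2 : N' (Sum.inr 0) (Sum.inl j) = -C (w j) := by
            simp [hN', updateCol_apply, hF, fromBlocks, hBLm, sfBL]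
          simp only [Pi.add_apply, Pi.smul_apply, h1, h2, smul_eq_mul]
          rw [hTL]
          by_cases hj : Fin.last n = j
          · subst hj
            simp [charmatrix_apply_eq, sfTL, fromBlocks, map_sub, _root_.map_mul]
            ring
          · simp [charmatrix_apply_ne _ _ _ hj, sfTL, fromBlocks, hj, map_sub, _root_.map_mul]
            ring
        | inr j =>
          have : j = 0 := Subsingleton.elim _ _
          subst this
          have h1 : N' (Sum.inl (Fin.last n)) (Sum.inr 0) = -C s := by
            simp [hN', updateCol_apply, hu']
          have h2 : N' (Sum.inr 0) (Sum.inr 0) = 1 := by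
            simp [hN', updateCol_apply, hu']
          simp only [Pi.add_apply, Pi.smul_apply, h1, h2, smul_eq_mul, mul_one]
          simp [fromBlocks]
      · rw [updateRow_ne (by simpa using hi)]
        cases j with
        | inl j =>
          simp [hN', updateCol_apply, hF, fromBlocks, hTL, charmatrix_apply, sfTL, hi]
        | inr j =>
          have : j = 0 := Subsingleton.elim _ _
          subst this
          simp [hN', updateCol_apply, hu', fromBlocks, hi]
    | inr i =>
      rw [updateRow_ne (by simp)]
      cases j with
      | inl j => simp [hN', updateCol_apply, hF, fromBlocks]
      | inr j =>
        have : j = 0 := Subsingleton.elim _ _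
        subst this
        simp [hN', updateCol_apply, hu', fromBlocks]
  have hudet : (F.updateCol (Sum.inr 0) u).det = C k * J.charpoly := by
    rw [hudet1, hrowop, hNfinal, det_fromBlocks_zero₁₂, det_fin_one, of_apply, charpoly]
    ring
  -- det TL
  have hTLdet : TL.det = J.charpoly + C s * gPoly J w := by
    have hrow : TL = (charmatrix J).updateRow (Fin.last n)
        (charmatrix J (Fin.last n) + C s • (fun j => C (w j))) := by
      ext i j
      by_cases hi : i = Fin.last n
      · subst hi
        rw [updateRow_self]
        by_cases hj : Fin.last n = j
        · subst hj
          simp [hTL, charmatrix_apply_eq, sfTL, map_sub, _root_.map_mul]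
          ring
        · simp [hTL, charmatrix_apply_ne _ _ _ hj, sfTL, hj, map_sub, _root_.map_mul]
          ring
      · rw [updateRow_ne hi]
        simp [hTL, charmatrix_apply, sfTL, hi]
    rw [hrow, det_updateRow_add, det_updateRow_smul, updateRow_eq_self, charpoly, gPoly]
  rw [hsplit, hudet, hvdet, hTLdet]
  ring
end ident

lemma natDegree_gPoly_le {n : ℕ} (J : Matrix (Fin (n + 1)) (Fin (n + 1)) ℝ)
    (w : Fin (n + 1) → ℝ) : (gPoly J w).natDegree ≤ n := by
  rw [gPoly, det_apply']
  refine natDegree_sum_le_of_forall_le _ _ fun σ _ => ?_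
  refine natDegree_mul_le.trans ?_
  rw [natDegree_intCast, zero_add]
  refine (natDegree_prod_le _ _).trans ?_
  have hb : ∀ i : Fin (n+1),
      (((charmatrix J).updateRow (Fin.last n) fun j => C (w j)) (σ i) i).natDegree
        ≤ if σ i = Fin.last n then 0 else 1 := by
    intro i
    by_cases h : σ i = Fin.last n
    · rw [h, updateRow_self]
      simp
    · rw [updateRow_ne h, if_neg h]
      by_cases hij : σ i = i
      · rw [hij, charmatrix_apply_eq]
        exact le_of_eq (natDegree_X_sub_C _)
      · rw [charmatrix_apply_ne _ _ _ hij]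
        simp
  refine (Finset.sum_le_sum fun i _ => hb i).trans ?_
  have h1 : ∑ i : Fin (n+1), (if σ i = Fin.last n then 0 else 1)
      = ∑ j : Fin (n+1), (if j = Fin.last n then 0 else 1) :=
    Fintype.sum_equiv σ _ _ fun i => rfl
  rw [h1, ← Finset.sum_erase_add _ _ (Finset.mem_univ (Fin.last n)), if_pos rfl, add_zero,
    Finset.sum_congr rfl (fun j hj => if_neg (Finset.ne_of_mem_erase hj))]
  simp [Finset.card_erase_of_mem]

lemma eval_norm_le (q : Polynomial ℂ) (m : ℕ) (hq : q.natDegree ≤ m) (z : ℂ) (hz : 1 ≤ ‖z‖) :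
    ‖q.eval z‖ ≤ (∑ i ∈ Finset.range (m+1), ‖q.coeff i‖) * ‖z‖ ^ m := by
  rw [eval_eq_sum_range' (Nat.lt_succ_of_le hq)]
  refine (norm_sum_le _ _).trans ?_
  rw [Finset.sum_mul]
  refine Finset.sum_le_sum fun i hi => ?_
  rw [norm_mul, norm_pow]
  exact mul_le_mul_of_nonneg_left
    (pow_le_pow_right₀ hz (Nat.le_of_lt_succ (Finset.mem_range.1 hi))) (norm_nonneg _)

lemma monic_eval_norm_ge (p : Polynomial ℂ) (m : ℕ) (hm : p.Monic) (hd : p.natDegree = m + 1)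
    (z : ℂ) (hz : 1 ≤ ‖z‖) :
    ‖z‖ ^ m * (‖z‖ - ∑ i ∈ Finset.range (m+1), ‖(p - X ^ (m+1)).coeff i‖) ≤ ‖p.eval z‖ := by
  set q : Polynomial ℂ := p - X ^ (m + 1) with hq
  have hqd : q.natDegree ≤ m := by
    rw [natDegree_le_iff_coeff_eq_zero]
    intro N hN
    rw [hq, coeff_sub, coeff_X_pow]
    rcases eq_or_lt_of_le (Nat.succ_le_of_lt hN) with h | h
    · have hc : p.coeff (m+1) = 1 := by rw [← hd]; exact hm.coeff_natDegree
      rw [← h, if_pos rfl, show m.succ = m + 1 from rfl, hc, sub_self]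
    · rw [if_neg (by omega), coeff_eq_zero_of_natDegree_lt (by omega), sub_zero]
  have h1 := eval_norm_le q m hqd z hz
  have he : z ^ (m+1) = p.eval z - q.eval z := by
    rw [hq, eval_sub, eval_pow, eval_X]; ring
  have h2 : ‖z‖ ^ (m+1) ≤ ‖p.eval z‖ + ‖q.eval z‖ := by
    rw [← norm_pow, he]; exact norm_sub_le _ _
  have h3 : ‖z‖ ^ (m+1) = ‖z‖ ^ m * ‖z‖ := pow_succ _ _
  nlinarith [norm_nonneg (q.eval z)]

lemma norm_add_ofReal_ge (z : ℂ) (k : ℝ) (hz : 0 ≤ z.re) (hk : 0 ≤ k) :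
    ‖z‖ ≤ ‖z + (k:ℂ)‖ ∧ k ≤ ‖z + (k:ℂ)‖ := by
  have e1 : ‖z + (k:ℂ)‖^2 = (z.re + k)^2 + z.im^2 := by
    rw [Complex.sq_norm, Complex.normSq_apply]
    simp
    ring
  have e2 : ‖z‖^2 = z.re^2 + z.im^2 := by
    rw [Complex.sq_norm, Complex.normSq_apply]; ring
  constructor
  · have h : ‖z‖^2 ≤ ‖z + (k:ℂ)‖^2 := by rw [e1, e2]; nlinarith
    have h2 := Real.sqrt_le_sqrt h
    rwa [Real.sqrt_sq (norm_nonneg _), Real.sqrt_sq (norm_nonneg _)] at h2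
  · have h : k^2 ≤ ‖z + (k:ℂ)‖^2 := by rw [e1]; nlinarith
    have h2 := Real.sqrt_le_sqrt h
    rwa [Real.sqrt_sq hk, Real.sqrt_sq (norm_nonneg _)] at h2

lemma charpolyC_signFixJac {n : ℕ} (J : Matrix (Fin (n + 1)) (Fin (n + 1)) ℝ)
    (s k : ℝ) (w : Fin (n + 1) → ℝ) :
    ((signFixJac J s k w).map (algebraMap ℝ ℂ)).charpoly
      = (X + C ((k : ℂ))) * ((J.map (algebraMap ℝ ℂ)).charpoly)
        + (C ((s : ℂ)) * ((gPoly J w).map (algebraMap ℝ ℂ))) * X := by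
  rw [Matrix.charpoly_map, charpoly_signFixJac, Matrix.charpoly_map]
  simp only [Polynomial.map_add, Polynomial.map_mul, Polynomial.map_X, Polynomial.map_C,
    Complex.coe_algebraMap]
  ring

lemma multiset_card_mul_le_sum (s : Multiset ℝ) (t : ℝ) (h : ∀ x ∈ s, t ≤ x) :
    (Multiset.card s : ℝ) * t ≤ s.sum := by
  induction s using Multiset.induction_on with
  | empty => simp
  | cons a s ih =>
    have ha := h a (Multiset.mem_cons_self a s)
    have hs := ih fun x hx => h x (Multiset.mem_cons_of_mem hx)
    simp only [Multiset.card_cons, Multiset.sum_cons]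
    push_cast
    linarith

lemma multiset_card_mul_lt_sum (s : Multiset ℝ) (t : ℝ) (hne : s ≠ 0)
    (h : ∀ x ∈ s, t < x) : (Multiset.card s : ℝ) * t < s.sum := by
  obtain ⟨b, hb⟩ := Multiset.exists_mem_of_ne_zero hne
  obtain ⟨s', rfl⟩ := Multiset.exists_cons_of_mem hb
  have ha := h _ (Multiset.mem_cons_self _ _)
  have hs := multiset_card_mul_le_sum s' t fun x hx => (h x (Multiset.mem_cons_of_mem hx)).le
  simp only [Multiset.card_cons, Multiset.sum_cons]
  push_cast
  linarith

lemma multiset_pow_card_le_prod (s : Multiset ℝ) (a : ℝ) (ha : 0 ≤ a)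
    (h : ∀ x ∈ s, a ≤ x) : a ^ (Multiset.card s) ≤ s.prod := by
  induction s using Multiset.induction_on with
  | empty => simp
  | cons b s ih =>
    have hb := h b (Multiset.mem_cons_self b s)
    have hs := ih fun x hx => h x (Multiset.mem_cons_of_mem hx)
    simp only [Multiset.card_cons, Multiset.sum_cons, Multiset.prod_cons, pow_succ']
    exact mul_le_mul hb hs (pow_nonneg ha _) (le_trans ha hb)

lemma part1 {n : ℕ} (J : Matrix (Fin (n + 1)) (Fin (n + 1)) ℝ) (s : ℝ) (w : Fin (n + 1) → ℝ)
    (hJ : IsStableMat J) :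
    ∃ K : ℝ, ∀ k : ℝ, K ≤ k → IsStableMat (signFixJac J s k w) := by
  classical
  set p : Polynomial ℂ := (J.map (algebraMap ℝ ℂ)).charpoly with hp
  have hpm : p.Monic := Matrix.charpoly_monic _
  have hpd : p.natDegree = n + 1 := by
    rw [hp, Matrix.charpoly_natDegree_eq_dim]; simp
  set q : Polynomial ℂ := C ((s:ℂ)) * ((gPoly J w).map (algebraMap ℝ ℂ)) with hqdef
  have hqd : q.natDegree ≤ n := by
    refine natDegree_mul_le.trans ?_
    rw [natDegree_C, zero_add]
    exact natDegree_map_le.trans (natDegree_gPoly_le J w)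
  have hne : ∀ z : ℂ, 0 ≤ z.re → p.eval z ≠ 0 := by
    intro z hz h0
    have hmem : z ∈ p.roots := by
      rw [mem_roots hpm.ne_zero]; exact h0
    exact absurd (hJ z hmem) (not_lt.2 hz)
  set Bq := ∑ i ∈ Finset.range (n+1), ‖q.coeff i‖ with hBq
  set Bp := ∑ i ∈ Finset.range (n+1), ‖(p - X ^ (n+1)).coeff i‖ with hBp
  have hBq0 : 0 ≤ Bq := Finset.sum_nonneg fun _ _ => norm_nonneg _
  have hBp0 : 0 ≤ Bp := Finset.sum_nonneg fun _ _ => norm_nonneg _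
  set R : ℝ := 1 + Bp + Bq with hR
  have hR1 : (1:ℝ) ≤ R := by simp only [hR]; linarith
  have hR0 : (0:ℝ) ≤ R := by linarith
  have hRlt : ∀ z : ℂ, R ≤ ‖z‖ → ‖q.eval z‖ < ‖p.eval z‖ := by
    intro z hzR
    have hz1 : (1:ℝ) ≤ ‖z‖ := le_trans hR1 hzR
    have h1 := eval_norm_le q n hqd z hz1
    have h2 := monic_eval_norm_ge p n hpm hpd z hz1
    have hzn : (1:ℝ) ≤ ‖z‖ ^ n := one_le_pow₀ hz1
    nlinarith [norm_nonneg (q.eval z)]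
  have hScomp : IsCompact {z : ℂ | 0 ≤ z.re ∧ ‖z‖ ≤ R} := by
    have hset : {z : ℂ | 0 ≤ z.re ∧ ‖z‖ ≤ R} = Metric.closedBall 0 R ∩ {z | 0 ≤ z.re} := by
      ext z
      simp [Metric.mem_closedBall, Complex.dist_eq, and_comm]
    rw [hset]
    exact (isCompact_closedBall 0 R).inter_right
      (isClosed_le continuous_const Complex.continuous_re)
  have hS0 : (0:ℂ) ∈ {z : ℂ | 0 ≤ z.re ∧ ‖z‖ ≤ R} := by
    simp only [Set.mem_setOf_eq, Complex.zero_re, le_refl, true_and, norm_zero]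
    exact hR0
  obtain ⟨z₁, hz₁S, hz₁min⟩ := hScomp.exists_isMinOn ⟨0, hS0⟩
    ((Polynomial.continuous p).norm.continuousOn)
  set δ := ‖p.eval z₁‖ with hδ
  have hδ0 : 0 < δ := norm_pos_iff.2 (hne z₁ hz₁S.1)
  have h0ball : (0:ℂ) ∈ Metric.closedBall (0:ℂ) R := by simp [hR0]
  obtain ⟨z₂, _, hz₂max⟩ := (isCompact_closedBall (0:ℂ) R).exists_isMaxOn ⟨0, h0ball⟩
    ((continuous_id.mul (Polynomial.continuous q)).norm.continuousOn)
  set Cm := ‖z₂ * q.eval z₂‖ with hCm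
  have hCmb : ∀ z : ℂ, ‖z‖ ≤ R → ‖z * q.eval z‖ ≤ Cm := by
    intro z hz
    refine hz₂max ?_
    rw [Metric.mem_closedBall, Complex.dist_eq, sub_zero]
    exact hz
  have hCm0 : (0:ℝ) ≤ Cm := norm_nonneg _
  refine ⟨max 1 (Cm/δ + 1), fun k hk => ?_⟩
  intro z hzroot
  by_contra hre
  push_neg at hre
  have hk1 : (1:ℝ) ≤ k := le_trans (le_max_left _ _) hk
  have hk0 : (0:ℝ) ≤ k := by linarith
  have hkC : Cm/δ + 1 ≤ k := le_trans (le_max_right _ _) hk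
  have hroot : (((signFixJac J s k w).map (algebraMap ℝ ℂ)).charpoly).eval z = 0 := by
    have := (mem_roots (Matrix.charpoly_monic _).ne_zero).1 hzroot
    exact this
  rw [charpolyC_signFixJac] at hroot
  simp only [eval_add, eval_mul, eval_X, eval_C] at hroot
  have heq : (z + (k:ℂ)) * p.eval z = -(q.eval z * z) := by
    have hq' : q.eval z = (s:ℂ) * eval z ((gPoly J w).map (algebraMap ℝ ℂ)) := by
      rw [hqdef]; simp
    rw [hq', hp]
    linear_combination hroot
  have hnorm : ‖z + (k:ℂ)‖ * ‖p.eval z‖ = ‖z‖ * ‖q.eval z‖ := by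
    rw [← norm_mul, heq, norm_neg, norm_mul, mul_comm]
  obtain ⟨hzk1, hzk2⟩ := norm_add_ofReal_ge z k hre hk0
  by_cases hcase : R ≤ ‖z‖
  · have hlt := hRlt z hcase
    nlinarith [norm_nonneg (p.eval z), norm_nonneg (q.eval z), norm_nonneg z,
      norm_nonneg (z + (k:ℂ))]
  · push_neg at hcase
    have hδle : δ ≤ ‖p.eval z‖ := hz₁min ⟨hre, hcase.le⟩
    have hCle : ‖z * q.eval z‖ ≤ Cm := hCmb z hcase.le
    rw [norm_mul] at hCle
    have hkd : Cm + δ ≤ k * δ := by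
      have : (Cm/δ + 1) * δ ≤ k * δ := mul_le_mul_of_nonneg_right hkC hδ0.le
      rw [add_mul, div_mul_cancel₀ _ hδ0.ne', one_mul] at this
      linarith
    nlinarith [norm_nonneg (p.eval z)]

lemma norm_multiset_prod_eq (s : Multiset ℂ) : ‖s.prod‖ = (s.map fun z => ‖z‖).prod := by
  induction s using Multiset.induction_on with
  | empty => simp
  | cons b s ih => simp [norm_mul, ih]

lemma part2 {n : ℕ} (J : Matrix (Fin (n + 1)) (Fin (n + 1)) ℝ) (s : ℝ) (w : Fin (n + 1) → ℝ)
    (hex : ∃ z ∈ (J.map (algebraMap ℝ ℂ)).charpoly.roots, 0 < z.re) :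
    ∃ K : ℝ, ∀ k : ℝ, K ≤ k → ¬ IsStableMat (signFixJac J s k w) := by
  classical
  obtain ⟨z₀, hz₀mem, ha⟩ := hex
  set p : Polynomial ℂ := (J.map (algebraMap ℝ ℂ)).charpoly with hp
  have hpm : p.Monic := Matrix.charpoly_monic _
  have hpd : p.natDegree = n + 1 := by
    rw [hp, Matrix.charpoly_natDegree_eq_dim]; simp
  have hpz : p.eval z₀ = 0 := (mem_roots hpm.ne_zero).1 hz₀mem
  set q : Polynomial ℂ := C ((s:ℂ)) * ((gPoly J w).map (algebraMap ℝ ℂ)) with hqdef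
  set a := z₀.re with haa
  set v : ℂ := q.eval z₀ * z₀ with hv
  have hχ : ∀ k : ℝ, (((signFixJac J s k w).map (algebraMap ℝ ℂ)).charpoly)
      = (X + C ((k:ℂ))) * p + q * X := fun k => charpolyC_signFixJac J s k w
  have hχm : ∀ k : ℝ, (((signFixJac J s k w).map (algebraMap ℝ ℂ)).charpoly).Monic :=
    fun k => Matrix.charpoly_monic _
  have hχd : ∀ k : ℝ,
      (((signFixJac J s k w).map (algebraMap ℝ ℂ)).charpoly).natDegree = n + 2 := by
    intro k; rw [Matrix.charpoly_natDegree_eq_dim]; simp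
  have hχeval : ∀ k : ℝ,
      (((signFixJac J s k w).map (algebraMap ℝ ℂ)).charpoly).eval z₀ = v := by
    intro k
    rw [hχ k]
    simp [hpz, hv]
  by_cases hveq : v = 0
  · refine ⟨1, fun k _ hstable => ?_⟩
    have hmem : z₀ ∈ (((signFixJac J s k w).map (algebraMap ℝ ℂ)).charpoly).roots := by
      rw [mem_roots (hχm k).ne_zero]
      rw [IsRoot.def, hχeval k, hveq]
    exact absurd (hstable z₀ hmem) (not_lt.2 ha.le)
  set c : ℂ := p.coeff n + q.coeff n with hc
  have hnext : ∀ k : ℝ,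
      (((signFixJac J s k w).map (algebraMap ℝ ℂ)).charpoly).nextCoeff = (k:ℂ) + c := by
    intro k
    rw [nextCoeff_of_natDegree_pos (by rw [hχd k]; omega), hχd k,
      show n + 2 - 1 = n + 1 from rfl, hχ k]
    rw [coeff_add, add_mul, coeff_add, coeff_X_mul, coeff_C_mul, coeff_mul_X,
      show p.coeff (n+1) = 1 from by rw [← hpd]; exact hpm.coeff_natDegree]
    rw [hc]
    ring
  have hav : (0:ℝ) < a := ha
  have hA : (0:ℝ) < a ^ (n+1) := pow_pos hav _
  have hvn : (0:ℝ) < ‖v‖ := norm_pos_iff.2 hveq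
  refine ⟨(n+2) * (‖v‖ / a^(n+1)) + |c.re| + 1, fun k hk hstable => ?_⟩
  set χ : Polynomial ℂ := ((signFixJac J s k w).map (algebraMap ℝ ℂ)).charpoly with hχk
  have hsplits : χ.Splits := IsAlgClosed.splits _
  have hcard : Multiset.card χ.roots = n + 2 := by
    rw [splits_iff_card_roots.1 hsplits, hχd k]
  have hsum : χ.roots.sum = -((k:ℂ) + c) := by
    have h1 := hsplits.nextCoeff_eq_neg_sum_roots_of_monic (hχm k)
    rw [hnext k] at h1
    linear_combination h1
  have hresum : ((χ.roots).map Complex.re).sum = -(k + c.re) := by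
    have h2 : ((χ.roots).map Complex.re).sum = (χ.roots.sum).re :=
      (map_multiset_sum Complex.reAddGroupHom χ.roots).symm
    rw [h2, hsum]
    simp
  set t : ℝ := (-(k + c.re)) / (n+2) with ht
  have hn2 : (0:ℝ) < (n:ℝ) + 2 := by positivity
  have hbad : ∃ ρ ∈ χ.roots, ρ.re ≤ t := by
    by_contra hcon
    push_neg at hcon
    have hne0 : (χ.roots).map Complex.re ≠ 0 := by
      intro h0
      have := congrArg Multiset.card h0
      rw [Multiset.card_map, hcard] at this
      simp at this
    have hall : ∀ x ∈ (χ.roots).map Complex.re, t < x := by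
      intro x hx
      obtain ⟨r, hr, rfl⟩ := Multiset.mem_map.1 hx
      exact hcon r hr
    have hlt := multiset_card_mul_lt_sum _ t hne0 hall
    rw [Multiset.card_map, hcard, hresum] at hlt
    rw [ht] at hlt
    have : ((n:ℝ) + 2) * (-(k + c.re) / ((n:ℝ)+2)) = -(k + c.re) := by
      field_simp
    push_cast at hlt
    rw [this] at hlt
    exact lt_irrefl _ hlt
  obtain ⟨ρ₀, hρ₀mem, hρ₀⟩ := hbad
  have hprod : χ = (χ.roots.map (fun r => X - C r)).prod :=
    (prod_multiset_X_sub_C_of_monic_of_roots_card_eq (hχm k) (by rw [hcard, hχd k])).symm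
  have hevalprod : v = (χ.roots.map (fun r => z₀ - r)).prod := by
    conv_lhs => rw [← hχeval k, ← hχk]
    conv_lhs => rw [hprod]
    rw [eval_multiset_prod, Multiset.map_map]
    congr 1
    ext r
    simp
  have hnormprod : ‖v‖ = ((χ.roots.map (fun r => ‖z₀ - r‖))).prod := by
    rw [hevalprod, norm_multiset_prod_eq, Multiset.map_map]
    rfl
  have hrest : ∀ x ∈ (χ.roots.erase ρ₀).map (fun r => ‖z₀ - r‖), a ≤ x := by
    intro x hx
    obtain ⟨r, hr, rfl⟩ := Multiset.mem_map.1 hx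
    have hrroot : r ∈ χ.roots := Multiset.mem_of_mem_erase hr
    have hrneg : r.re < 0 := hstable r hrroot
    have h1 : (z₀ - r).re ≤ ‖z₀ - r‖ := by
      exact Complex.re_le_norm _
    have h2 : (z₀ - r).re = a - r.re := by simp [haa]
    linarith
  have hprodrest : a ^ (n+1) ≤ ((χ.roots.erase ρ₀).map (fun r => ‖z₀ - r‖)).prod := by
    have hcard' : Multiset.card ((χ.roots.erase ρ₀).map (fun r => ‖z₀ - r‖)) = n + 1 := by
      rw [Multiset.card_map, Multiset.card_erase_of_mem hρ₀mem, hcard]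
      rfl
    rw [← hcard']
    exact multiset_pow_card_le_prod _ a hav.le hrest
  have hfirst : a - t ≤ ‖z₀ - ρ₀‖ := by
    have h1 : (z₀ - ρ₀).re ≤ ‖z₀ - ρ₀‖ := by
      exact Complex.re_le_norm _
    have h2 : (z₀ - ρ₀).re = a - ρ₀.re := by simp [haa]
    linarith
  have hsplitv : ‖v‖ = ‖z₀ - ρ₀‖ * ((χ.roots.erase ρ₀).map (fun r => ‖z₀ - r‖)).prod := by
    rw [hnormprod]
    conv_lhs => rw [← Multiset.cons_erase hρ₀mem]
    rw [Multiset.map_cons, Multiset.prod_cons]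
  -- final arithmetic
  have hkc : ((n:ℝ)+2) * (‖v‖ / a^(n+1)) + 1 ≤ k + c.re := by
    have hc' : -|c.re| ≤ c.re := neg_abs_le _
    push_cast at hk
    linarith
  have hdivk : ‖v‖ / a^(n+1) + 1/((n:ℝ)+2) ≤ (k + c.re)/((n:ℝ)+2) := by
    rw [div_add_div _ _ (ne_of_gt hA) (ne_of_gt hn2)]
    rw [div_le_div_iff₀ (by positivity) hn2]
    have expand : (‖v‖ * ((n:ℝ)+2) + a^(n+1) * 1) * ((n:ℝ)+2)
        = (((n:ℝ)+2) * (‖v‖ / a^(n+1)) + 1) * (a^(n+1) * ((n:ℝ)+2)) := by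
      field_simp
    rw [expand]
    exact mul_le_mul_of_nonneg_right hkc (by positivity)
  have hteq : a - t = a + (k + c.re)/((n:ℝ)+2) := by
    rw [ht]
    push_cast
    ring
  have hvA : (‖v‖ / a^(n+1)) * a^(n+1) = ‖v‖ := div_mul_cancel₀ _ (ne_of_gt hA)
  have hat0 : 0 ≤ a - t := by
    have : (0:ℝ) ≤ ‖v‖ / a^(n+1) := by positivity
    have h1n : (0:ℝ) < 1/((n:ℝ)+2) := by positivity
    linarith
  have hchain : (a - t) * a^(n+1) ≤ ‖v‖ :=
    hsplitv ▸ mul_le_mul hfirst hprodrest hA.le (norm_nonneg _)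
  have hsum2 : a + (‖v‖ / a^(n+1) + 1/((n:ℝ)+2)) ≤ a - t := by
    rw [hteq]; linarith
  have hmul := mul_le_mul_of_nonneg_right hsum2 hA.le
  have hexp : (a + (‖v‖ / a^(n+1) + 1/((n:ℝ)+2))) * a^(n+1)
      = a * a^(n+1) + ‖v‖ + (1/((n:ℝ)+2)) * a^(n+1) := by
    rw [add_mul, add_mul, hvA]
    ring
  rw [hexp] at hmul
  have hp1 : (0:ℝ) < a * a^(n+1) := mul_pos hav hA
  have hp2 : (0:ℝ) < (1/((n:ℝ)+2)) * a^(n+1) := mul_pos (div_pos one_pos hn2) hA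
  linarith

/-- If `J` is stable then the sign fixed Jacobian `J̌_k` is stable for all
sufficiently large `k`; conversely, if `J` has an eigenvalue with positive real
part then `J̌_k` is unstable for all sufficiently large `k`. -/
theorem signFixJac_stability {n : ℕ}
    (J : Matrix (Fin (n + 1)) (Fin (n + 1)) ℝ) (s : ℝ) (w : Fin (n + 1) → ℝ) :
    (IsStableMat J → ∃ K : ℝ, ∀ k : ℝ, K ≤ k → IsStableMat (signFixJac J s k w)) ∧
    ((∃ z ∈ (J.map (algebraMap ℝ ℂ)).charpoly.roots, 0 < z.re) →
      ∃ K : ℝ, ∀ k : ℝ, K ≤ k → ¬ IsStableMat (signFixJac J s k w)) :=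
  ⟨fun h => part1 J s w h, fun h => part2 J s w h⟩
end

section
/- Let S₁ be the stoichiometric matrix of a CRN with n₁ complexes, ℓ₁ linkage classes, and rank s₁, and let S₂ be obtained by one application of the sign fixing algorithm (adding species B' , replacing reaction p₁A+C₁ → p₂B+C₂ by p₁A+C₁ → B'+C₂ and adding B' → p₂B). Then the changes satisfy Δs = 1, 1 ≤ Δn ≤ 3, and Δℓ ≤ 2, where Δn = n₂ - n₁, Δℓ = ℓ₂ - ℓ₁, Δs = s₂ - s₁. -/
open Finset

/-- A chemical reaction network on a species set `σ`: a finite set of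
reactions, each a pair (source complex, target complex), complexes being
formal `ℕ`-linear combinations of species. -/
structure CRN (σ : Type) [DecidableEq σ] where
  reactions : Finset ((σ → ℕ) × (σ → ℕ))

variable {σ : Type} [DecidableEq σ] [Fintype σ]

/-- The set of complexes of a CRN. -/
def CRN.complexes (R : CRN σ) : Finset (σ → ℕ) :=
  R.reactions.image Prod.fst ∪ R.reactions.image Prod.snd

/-- `n`, the number of complexes. -/
def CRN.numComplexes (R : CRN σ) : ℕ := R.complexes.card

/-- The undirected graph on complexes whose edges are the reactions. -/
def CRN.linkGraph (R : CRN σ) : SimpleGraph {c // c ∈ R.complexes} :=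
  SimpleGraph.fromRel (fun a b => ((a : σ → ℕ), (b : σ → ℕ)) ∈ R.reactions)

/-- `ℓ`, the number of linkage classes (connected components of the graph on
complexes). -/
noncomputable def CRN.numLinkage (R : CRN σ) : ℕ :=
  Nat.card (R.linkGraph.ConnectedComponent)

/-- `s`, the rank of the stoichiometric matrix, i.e. the dimension of the span
of the reaction vectors. -/
noncomputable def CRN.srank (R : CRN σ) : ℕ :=
  Module.finrank ℝ (Submodule.span ℝ
    { v : σ → ℝ | ∃ r ∈ R.reactions, v = fun i => (r.2 i : ℝ) - (r.1 i : ℝ) })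

/-- The topological deficiency `δ = n - ℓ - s`. -/
noncomputable def CRN.deficiency (R : CRN σ) : ℤ :=
  (R.numComplexes : ℤ) - R.numLinkage - R.srank

/-- The complex `p • A` consisting of `p` copies of the single species `A`. -/
def mono (A : σ) (p : ℕ) : σ → ℕ := fun i => if i = A then p else 0

/-- Extend a complex by zero at the new species `B' = none`. -/
def extC (y : σ → ℕ) : Option σ → ℕ
  | none => 0
  | some i => y i

/-- The complex `B' + C₂`, where `B' = none` is the new species. -/
def extB' (C₂ : σ → ℕ) : Option σ → ℕ
  | none => 1
  | some i => C₂ i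

/-- The complex consisting of the new species `B'` alone. -/
def bPrime : Option σ → ℕ
  | none => 1
  | some _ => 0

/-- One step of the sign fixing algorithm on the CRN level: the reaction
`p₁A + C₁ → p₂B + C₂` is replaced by `p₁A + C₁ → B' + C₂` for a new species
`B'`, the reaction `B' → p₂B` is added, and all other reactions are kept. -/
def signFixCRN (R : CRN σ) (A B : σ) (p₁ p₂ : ℕ) (C₁ C₂ : σ → ℕ) :
    CRN (Option σ) :=
  ⟨((R.reactions.erase
        ((fun i => mono A p₁ i + C₁ i), (fun i => mono B p₂ i + C₂ i))).image
      (fun r => (extC r.1, extC r.2))) ∪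
    {(extC (fun i => mono A p₁ i + C₁ i), extB' C₂), (bPrime, extC (mono B p₂))}⟩

namespace SFAux

variable {σ : Type} [DecidableEq σ] [Fintype σ]

lemma extC_injective : Function.Injective (extC : (σ → ℕ) → Option σ → ℕ) := by
  intro a b h
  funext i
  exact congrFun h (some i)

lemma extC_none (y : σ → ℕ) : extC y none = 0 := rfl
lemma extC_some (y : σ → ℕ) (i : σ) : extC y (some i) = y i := rfl
lemma extB'_none (C : σ → ℕ) : extB' C none = 1 := rfl
lemma extB'_some (C : σ → ℕ) (i : σ) : extB' C (some i) = C i := rfl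
lemma bPrime_none : (bPrime : Option σ → ℕ) none = 1 := rfl
lemma bPrime_some (i : σ) : (bPrime : Option σ → ℕ) (some i) = 0 := rfl

lemma fst_mem_complexes {R : CRN σ} {r} (h : r ∈ R.reactions) : r.1 ∈ R.complexes :=
  Finset.mem_union_left _ (Finset.mem_image_of_mem _ h)

lemma snd_mem_complexes {R : CRN σ} {r} (h : r ∈ R.reactions) : r.2 ∈ R.complexes :=
  Finset.mem_union_right _ (Finset.mem_image_of_mem _ h)

lemma comp_eq_of_pair (R : CRN σ) {a b : {c // c ∈ R.complexes}}
    (h : ((a : σ → ℕ), (b : σ → ℕ)) ∈ R.reactions) :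
    R.linkGraph.connectedComponentMk a = R.linkGraph.connectedComponentMk b := by
  by_cases hab : a = b
  · rw [hab]
  · refine SimpleGraph.ConnectedComponent.connectedComponentMk_eq_of_adj ?_
    show (SimpleGraph.fromRel _).Adj a b
    exact (SimpleGraph.fromRel_adj _ a b).mpr ⟨hab, Or.inl h⟩

section

variable (R : CRN σ) (A B : σ) (p₁ p₂ : ℕ) (C₁ C₂ : σ → ℕ)

local notation "src₀" => (fun i => mono A p₁ i + C₁ i : σ → ℕ)
local notation "tgt₀" => (fun i => mono B p₂ i + C₂ i : σ → ℕ)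
local notation "R₂" => signFixCRN R A B p₁ p₂ C₁ C₂

lemma hr₁'mem : (extC src₀, extB' C₂) ∈ (R₂).reactions := by
  apply Finset.mem_union_right
  exact Finset.mem_insert_self _ _

lemma hr₂'mem : ((bPrime : Option σ → ℕ), extC (mono B p₂)) ∈ (R₂).reactions := by
  apply Finset.mem_union_right
  exact Finset.mem_insert_of_mem (Finset.mem_singleton_self _)

lemma img_mem {s : (σ → ℕ) × (σ → ℕ)} (hs : s ∈ R.reactions.erase (src₀, tgt₀)) :
    (extC s.1, extC s.2) ∈ (R₂).reactions :=
  Finset.mem_union_left _ (Finset.mem_image_of_mem _ hs)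

lemma mem_reactions₂ {r : (Option σ → ℕ) × (Option σ → ℕ)}
    (h : r ∈ (R₂).reactions) :
    (∃ s ∈ R.reactions.erase (src₀, tgt₀), r = (extC s.1, extC s.2)) ∨
      r = (extC src₀, extB' C₂) ∨ r = ((bPrime : Option σ → ℕ), extC (mono B p₂)) := by
  rcases Finset.mem_union.mp h with h | h
  · obtain ⟨s, hs, rfl⟩ := Finset.mem_image.mp h
    exact Or.inl ⟨s, hs, rfl⟩
  · rcases Finset.mem_insert.mp h with h | h
    · exact Or.inr (Or.inl h)
    · exact Or.inr (Or.inr (Finset.mem_singleton.mp h))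

lemma mem_complexes₂ (hr₁ : ((src₀ : σ → ℕ), (tgt₀ : σ → ℕ)) ∈ R.reactions)
    {w : Option σ → ℕ} (hw : w ∈ (R₂).complexes) :
    (∃ y ∈ R.complexes, w = extC y) ∨ w = extB' C₂ ∨ w = (bPrime : Option σ → ℕ) ∨
      w = extC (mono B p₂) := by
  have key : ∀ r ∈ (R₂).reactions, (w = r.1 ∨ w = r.2) →
      (∃ y ∈ R.complexes, w = extC y) ∨ w = extB' C₂ ∨ w = (bPrime : Option σ → ℕ) ∨
      w = extC (mono B p₂) := by
    rintro r hr hw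
    rcases mem_reactions₂ R A B p₁ p₂ C₁ C₂ hr with ⟨s, hs, rfl⟩ | rfl | rfl
    · have hs' := Finset.mem_of_mem_erase hs
      rcases hw with rfl | rfl
      · exact Or.inl ⟨s.1, fst_mem_complexes hs', rfl⟩
      · exact Or.inl ⟨s.2, snd_mem_complexes hs', rfl⟩
    · rcases hw with rfl | rfl
      · exact Or.inl ⟨src₀, fst_mem_complexes hr₁, rfl⟩
      · exact Or.inr (Or.inl rfl)
    · rcases hw with rfl | rfl
      · exact Or.inr (Or.inr (Or.inl rfl))
      · exact Or.inr (Or.inr (Or.inr rfl))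
  rcases Finset.mem_union.mp hw with h | h
  · obtain ⟨r, hr, rfl⟩ := Finset.mem_image.mp h
    exact key r hr (Or.inl rfl)
  · obtain ⟨r, hr, rfl⟩ := Finset.mem_image.mp h
    exact key r hr (Or.inr rfl)

lemma extC_mem_complexes₂ {y : σ → ℕ} (hy : y ∈ R.complexes) (hy' : y ≠ tgt₀) :
    extC y ∈ (R₂).complexes := by
  rcases Finset.mem_union.mp hy with h | h
  · obtain ⟨r, hr, rfl⟩ := Finset.mem_image.mp h
    by_cases h0 : r = (src₀, tgt₀)
    · subst h0
      exact fst_mem_complexes (hr₁'mem R A B p₁ p₂ C₁ C₂)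
    · exact fst_mem_complexes (img_mem R A B p₁ p₂ C₁ C₂ (Finset.mem_erase.mpr ⟨h0, hr⟩))
  · obtain ⟨r, hr, rfl⟩ := Finset.mem_image.mp h
    by_cases h0 : r = (src₀, tgt₀)
    · exact absurd (congrArg Prod.snd h0) hy'
    · exact snd_mem_complexes (img_mem R A B p₁ p₂ C₁ C₂ (Finset.mem_erase.mpr ⟨h0, hr⟩))

lemma numComplexes_ub (hr₁ : ((src₀ : σ → ℕ), (tgt₀ : σ → ℕ)) ∈ R.reactions) :
    (R₂).numComplexes ≤ R.numComplexes + 3 := by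
  have hsub : (R₂).complexes ⊆
      insert (extB' C₂) (insert (bPrime : Option σ → ℕ)
        (insert (extC (mono B p₂)) (R.complexes.image extC))) := by
    intro w hw
    rcases mem_complexes₂ R A B p₁ p₂ C₁ C₂ hr₁ hw with ⟨y, hy, rfl⟩ | rfl | rfl | rfl
    · exact Finset.mem_insert_of_mem (Finset.mem_insert_of_mem
        (Finset.mem_insert_of_mem (Finset.mem_image_of_mem _ hy)))
    · exact Finset.mem_insert_self _ _
    · exact Finset.mem_insert_of_mem (Finset.mem_insert_self _ _)
    · exact Finset.mem_insert_of_mem (Finset.mem_insert_of_mem (Finset.mem_insert_self _ _))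
  calc (R₂).numComplexes ≤ _ := Finset.card_le_card hsub
    _ ≤ (R.complexes.image extC).card + 3 := by
        refine le_trans (Finset.card_insert_le _ _) ?_
        refine le_trans (Nat.add_le_add_right (Finset.card_insert_le _ _) 1) ?_
        refine le_trans (Nat.add_le_add_right (Nat.add_le_add_right (Finset.card_insert_le _ _) 1) 1) ?_
        omega
    _ = R.numComplexes + 3 := by
        rw [Finset.card_image_of_injective _ extC_injective]; rfl

lemma numComplexes_lb (hr₁ : ((src₀ : σ → ℕ), (tgt₀ : σ → ℕ)) ∈ R.reactions) :
    R.numComplexes + 1 ≤ (R₂).numComplexes := by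
  have hbP : (bPrime : Option σ → ℕ) ∉ R.complexes.image extC := by
    intro h
    obtain ⟨y, _, hy⟩ := Finset.mem_image.mp h
    exact absurd (congrFun hy none) (by simp [extC_none, bPrime_none])
  by_cases hC : ∀ i, C₂ i = 0
  · -- tgt₀ = mono B p₂, so all old complexes survive
    have htgt : (tgt₀ : σ → ℕ) = mono B p₂ := by funext i; simp [hC i]
    have hsub : insert (bPrime : Option σ → ℕ) (R.complexes.image extC) ⊆ (R₂).complexes := by
      intro w hw
      rcases Finset.mem_insert.mp hw with rfl | hw
      · exact fst_mem_complexes (hr₂'mem R A B p₁ p₂ C₁ C₂)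
      · obtain ⟨y, hy, rfl⟩ := Finset.mem_image.mp hw
        by_cases hy' : y = tgt₀
        · subst hy'
          rw [htgt]
          exact snd_mem_complexes (hr₂'mem R A B p₁ p₂ C₁ C₂)
        · exact extC_mem_complexes₂ R A B p₁ p₂ C₁ C₂ hy hy'
    calc R.numComplexes + 1
        = (insert (bPrime : Option σ → ℕ) (R.complexes.image extC)).card := by
          rw [Finset.card_insert_of_notMem hbP,
            Finset.card_image_of_injective _ extC_injective]
          rfl
      _ ≤ _ := Finset.card_le_card hsub
  · push_neg at hC
    obtain ⟨j, hj⟩ := hC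
    have htgtmem : (tgt₀ : σ → ℕ) ∈ R.complexes := snd_mem_complexes hr₁
    set T : Finset (Option σ → ℕ) :=
      insert (extB' C₂) (insert (bPrime : Option σ → ℕ)
        ((R.complexes.erase tgt₀).image extC)) with hT
    have hbP' : (bPrime : Option σ → ℕ) ∉ (R.complexes.erase tgt₀).image extC := by
      intro h
      obtain ⟨y, _, hy⟩ := Finset.mem_image.mp h
      exact absurd (congrFun hy none) (by simp [extC_none, bPrime_none])
    have hB'new : extB' C₂ ∉ insert (bPrime : Option σ → ℕ)
        ((R.complexes.erase tgt₀).image extC) := by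
      intro h
      rcases Finset.mem_insert.mp h with h | h
      · exact absurd (congrFun h (some j)) (by simp [extB'_some, bPrime_some, hj])
      · obtain ⟨y, _, hy⟩ := Finset.mem_image.mp h
        exact absurd (congrFun hy.symm none) (by simp [extC_none, extB'_none])
    have hsub : T ⊆ (R₂).complexes := by
      intro w hw
      rcases Finset.mem_insert.mp hw with rfl | hw
      · exact snd_mem_complexes (hr₁'mem R A B p₁ p₂ C₁ C₂)
      rcases Finset.mem_insert.mp hw with rfl | hw
      · exact fst_mem_complexes (hr₂'mem R A B p₁ p₂ C₁ C₂)
      obtain ⟨y, hy, rfl⟩ := Finset.mem_image.mp hw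
      exact extC_mem_complexes₂ R A B p₁ p₂ C₁ C₂ (Finset.mem_of_mem_erase hy)
        (Finset.ne_of_mem_erase hy)
    have hTcard : T.card = (R.complexes.card - 1) + 2 := by
      rw [hT, Finset.card_insert_of_notMem hB'new, Finset.card_insert_of_notMem hbP',
        Finset.card_image_of_injective _ extC_injective, Finset.card_erase_of_mem htgtmem]
    have hpos : 1 ≤ R.complexes.card := Finset.card_pos.mpr ⟨_, htgtmem⟩
    have := Finset.card_le_card hsub
    unfold CRN.numComplexes
    omega

lemma srank_aux (hr₁ : ((src₀ : σ → ℕ), (tgt₀ : σ → ℕ)) ∈ R.reactions) :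
    (R₂).srank = R.srank + 1 := by
  classical
  set E : (σ → ℝ) →ₗ[ℝ] (Option σ → ℝ) :=
    { toFun := fun v o => o.elim 0 v
      map_add' := by intro u v; funext o; cases o <;> simp
      map_smul' := by intro c v; funext o; cases o <;> simp } with hE
  have hEinj : Function.Injective E := by
    intro u v h
    funext i
    exact congrFun h (some i)
  set S₁ : Set (σ → ℝ) :=
    { v : σ → ℝ | ∃ r ∈ R.reactions, v = fun i => (r.2 i : ℝ) - (r.1 i : ℝ) } with hS₁
  set S₂ : Set (Option σ → ℝ) :=
    { v : Option σ → ℝ | ∃ r ∈ (R₂).reactions, v = fun i => (r.2 i : ℝ) - (r.1 i : ℝ) } with hS₂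
  set v₂ : Option σ → ℝ := fun o => (extC (mono B p₂) o : ℝ) - (bPrime o : ℝ) with hv₂
  have hw₀mem : (fun i => ((tgt₀ : σ → ℕ) i : ℝ) - ((src₀ : σ → ℕ) i : ℝ)) ∈ S₁ :=
    ⟨(src₀, tgt₀), hr₁, rfl⟩
  have hv₂mem : v₂ ∈ S₂ := ⟨((bPrime : Option σ → ℕ), extC (mono B p₂)),
    hr₂'mem R A B p₁ p₂ C₁ C₂, rfl⟩
  have hv₁mem : (fun o => (extB' C₂ o : ℝ) - (extC src₀ o : ℝ)) ∈ S₂ :=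
    ⟨(extC src₀, extB' C₂), hr₁'mem R A B p₁ p₂ C₁ C₂, rfl⟩
  have hsum : (fun o => (extB' C₂ o : ℝ) - (extC src₀ o : ℝ)) + v₂
      = E (fun i => ((tgt₀ : σ → ℕ) i : ℝ) - ((src₀ : σ → ℕ) i : ℝ)) := by
    funext o
    cases o with
    | none => simp [hE, hv₂, extC, extB', bPrime]
    | some i => simp [hE, hv₂, extC, extB', bPrime]; ring
  have hspan : Submodule.span ℝ S₂ = (Submodule.span ℝ S₁).map E ⊔ Submodule.span ℝ {v₂} := by
    apply le_antisymm
    · rw [Submodule.span_le]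
      rintro v ⟨r, hr, rfl⟩
      rcases mem_reactions₂ R A B p₁ p₂ C₁ C₂ hr with ⟨s, hs, rfl⟩ | rfl | rfl
      · have : (fun o => (((extC s.1, extC s.2).2 o : ℕ) : ℝ) - ((extC s.1, extC s.2).1 o : ℝ))
            = E (fun i => (s.2 i : ℝ) - (s.1 i : ℝ)) := by
          funext o; cases o <;> simp [hE, extC]
        rw [this]
        exact SetLike.mem_coe.mpr (Submodule.mem_sup_left (Submodule.mem_map_of_mem
          (Submodule.subset_span ⟨s, Finset.mem_of_mem_erase hs, rfl⟩)))
      · have : (fun o => ((((extC src₀ : Option σ → ℕ), extB' C₂).2 o : ℕ) : ℝ)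
            - (((extC src₀ : Option σ → ℕ), extB' C₂).1 o : ℝ))
            = E (fun i => ((tgt₀ : σ → ℕ) i : ℝ) - ((src₀ : σ → ℕ) i : ℝ)) - v₂ := by
          rw [← hsum]; ring
        rw [this]
        refine SetLike.mem_coe.mpr (Submodule.sub_mem _ ?_ ?_)
        · exact Submodule.mem_sup_left (Submodule.mem_map_of_mem (Submodule.subset_span hw₀mem))
        · exact Submodule.mem_sup_right (Submodule.subset_span rfl)
      · exact SetLike.mem_coe.mpr (Submodule.mem_sup_right (Submodule.subset_span rfl))
    · apply sup_le
      · rw [Submodule.map_span, Submodule.span_le]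
        rintro _ ⟨w, ⟨r, hr, rfl⟩, rfl⟩
        by_cases hr0 : r = ((src₀ : σ → ℕ), (tgt₀ : σ → ℕ))
        · subst hr0
          apply SetLike.mem_coe.mpr
          rw [← hsum]
          exact Submodule.add_mem _ (Submodule.subset_span hv₁mem)
            (Submodule.subset_span hv₂mem)
        · apply SetLike.mem_coe.mpr
          refine Submodule.subset_span
            ⟨(extC r.1, extC r.2), img_mem R A B p₁ p₂ C₁ C₂ (Finset.mem_erase.mpr ⟨hr0, hr⟩), ?_⟩
          funext o; cases o <;> simp [hE, extC]
      · rw [Submodule.span_le, Set.singleton_subset_iff]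
        exact SetLike.mem_coe.mpr (Submodule.subset_span hv₂mem)
  have hdisj : Disjoint ((Submodule.span ℝ S₁).map E) (Submodule.span ℝ {v₂}) := by
    rw [Submodule.disjoint_def]
    intro x hx1 hx2
    rw [Submodule.mem_span_singleton] at hx2
    obtain ⟨c, rfl⟩ := hx2
    obtain ⟨y, _, hxy⟩ := Submodule.mem_map.mp hx1
    have hnone : (c • v₂) none = 0 := by
      rw [← hxy]; simp [hE]
    have hc : c = 0 := by
      simpa [hv₂, extC, bPrime] using hnone
    simp [hc]
  have hfin := Submodule.finrank_sup_add_finrank_inf_eq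
    ((Submodule.span ℝ S₁).map E) (Submodule.span ℝ {v₂})
  rw [disjoint_iff.mp hdisj] at hfin
  have h1 : Module.finrank ℝ ((Submodule.span ℝ S₁).map E) = R.srank :=
    (LinearEquiv.finrank_eq (Submodule.equivMapOfInjective E hEinj (Submodule.span ℝ S₁))).symm
  have h2 : Module.finrank ℝ (Submodule.span ℝ {v₂}) = 1 := by
    refine finrank_span_singleton ?_
    intro h
    have := congrFun h none
    simp [hv₂, extC, bPrime] at this
  rw [h1, h2, finrank_bot] at hfin
  show Module.finrank ℝ (Submodule.span ℝ S₂) = R.srank + 1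
  rw [hspan]
  omega

lemma linkage_ub (hr₁ : ((src₀ : σ → ℕ), (tgt₀ : σ → ℕ)) ∈ R.reactions) :
    (R₂).numLinkage ≤ R.numLinkage + 2 := by
  classical
  have hsrc : (src₀ : σ → ℕ) ∈ R.complexes := fst_mem_complexes hr₁
  have htgt : (tgt₀ : σ → ℕ) ∈ R.complexes := snd_mem_complexes hr₁
  have m1 : extC src₀ ∈ (R₂).complexes := fst_mem_complexes (hr₁'mem R A B p₁ p₂ C₁ C₂)
  have m2 : extB' C₂ ∈ (R₂).complexes := snd_mem_complexes (hr₁'mem R A B p₁ p₂ C₁ C₂)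
  have m3 : (bPrime : Option σ → ℕ) ∈ (R₂).complexes :=
    fst_mem_complexes (hr₂'mem R A B p₁ p₂ C₁ C₂)
  have m4 : extC (mono B p₂) ∈ (R₂).complexes :=
    snd_mem_complexes (hr₂'mem R A B p₁ p₂ C₁ C₂)
  set G₁ := R.linkGraph with hG₁
  set G₂ := (R₂).linkGraph with hG₂
  set ec : {c // c ∈ R.complexes} → G₂.ConnectedComponent := fun y =>
    if h : extC y.val ∈ (R₂).complexes then G₂.connectedComponentMk ⟨extC y.val, h⟩
    else G₂.connectedComponentMk ⟨bPrime, m3⟩ with hec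
  have ec_pos : ∀ (y : {c // c ∈ R.complexes}) (h : extC y.val ∈ (R₂).complexes),
      ec y = G₂.connectedComponentMk ⟨extC y.val, h⟩ := fun y h => dif_pos h
  have ec_neg : ∀ (y : {c // c ∈ R.complexes}) (h : ¬ extC y.val ∈ (R₂).complexes),
      ec y = G₂.connectedComponentMk ⟨bPrime, m3⟩ := fun y h => dif_neg h
  have ML : ∀ (y y' : {c // c ∈ R.complexes}) (w : G₁.Walk y y')
      (h' : extC y'.val ∈ (R₂).complexes),
      G₂.connectedComponentMk ⟨extC y'.val, h'⟩ = ec y ∨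
      G₂.connectedComponentMk ⟨extC y'.val, h'⟩ = G₂.connectedComponentMk ⟨bPrime, m3⟩ ∨
      G₂.connectedComponentMk ⟨extC y'.val, h'⟩ = ec ⟨tgt₀, htgt⟩ ∨
      G₂.connectedComponentMk ⟨extC y'.val, h'⟩ = G₂.connectedComponentMk ⟨extC src₀, m1⟩ := by
    intro y y' w
    induction w with
    | nil => intro h'; exact Or.inl (ec_pos _ h').symm
    | @cons a b c hadj p ih =>
      intro h'
      have key : ec b = ec a ∨ ec b = G₂.connectedComponentMk ⟨bPrime, m3⟩ ∨
          ec b = ec ⟨tgt₀, htgt⟩ ∨ ec b = G₂.connectedComponentMk ⟨extC src₀, m1⟩ := by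
        by_cases hb : extC b.val ∈ (R₂).complexes
        · by_cases hbt : b.val = tgt₀
          · refine Or.inr (Or.inr (Or.inl ?_))
            congr 1
            exact Subtype.ext hbt
          by_cases hbs : b.val = src₀
          · refine Or.inr (Or.inr (Or.inr ?_))
            rw [ec_pos b hb]
            congr 1
            exact Subtype.ext (congrArg extC hbs)
          · have hadj' : (SimpleGraph.fromRel
                (fun a b : {c // c ∈ R.complexes} =>
                  ((a : σ → ℕ), (b : σ → ℕ)) ∈ R.reactions)).Adj a b := hadj
            obtain ⟨hne, hpair⟩ := (SimpleGraph.fromRel_adj _ a b).mp hadj'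
            refine Or.inl ?_
            rcases hpair with hp | hp
            · have hmem : ((a.val, b.val)) ∈ R.reactions.erase (src₀, tgt₀) :=
                Finset.mem_erase.mpr ⟨fun hq => hbt (congrArg Prod.snd hq), hp⟩
              have himg := img_mem R A B p₁ p₂ C₁ C₂ hmem
              have ha' : extC a.val ∈ (R₂).complexes := fst_mem_complexes himg
              have hcc := comp_eq_of_pair (R₂)
                (a := ⟨extC a.val, ha'⟩) (b := ⟨extC b.val, hb⟩) himg
              rw [ec_pos b hb, ec_pos a ha']
              exact hcc.symm
            · have hmem : ((b.val, a.val)) ∈ R.reactions.erase (src₀, tgt₀) :=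
                Finset.mem_erase.mpr ⟨fun hq => hbs (congrArg Prod.fst hq), hp⟩
              have himg := img_mem R A B p₁ p₂ C₁ C₂ hmem
              have ha' : extC a.val ∈ (R₂).complexes := snd_mem_complexes himg
              have hcc := comp_eq_of_pair (R₂)
                (a := ⟨extC b.val, hb⟩) (b := ⟨extC a.val, ha'⟩) himg
              rw [ec_pos b hb, ec_pos a ha']
              exact hcc
        · exact Or.inr (Or.inl (ec_neg b hb))
      rcases ih h' with h | h | h | h
      · rcases key with k | k | k | k
        · exact Or.inl (h.trans k)
        · exact Or.inr (Or.inl (h.trans k))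
        · exact Or.inr (Or.inr (Or.inl (h.trans k)))
        · exact Or.inr (Or.inr (Or.inr (h.trans k)))
      · exact Or.inr (Or.inl h)
      · exact Or.inr (Or.inr (Or.inl h))
      · exact Or.inr (Or.inr (Or.inr h))
  have hex : ∀ c : G₁.ConnectedComponent, ∃ v, G₁.connectedComponentMk v = c :=
    fun c => c.exists_rep
  set rep : G₁.ConnectedComponent → {c // c ∈ R.complexes} := fun c =>
    if c = G₁.connectedComponentMk ⟨src₀, hsrc⟩ then ⟨src₀, hsrc⟩ else (hex c).choose
    with hrepdef
  have hrep : ∀ c, G₁.connectedComponentMk (rep c) = c := by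
    intro c
    simp only [hrepdef]
    split
    · next h => exact h.symm
    · exact (hex c).choose_spec
  have hreps : rep (G₁.connectedComponentMk ⟨src₀, hsrc⟩) = ⟨src₀, hsrc⟩ := by
    simp only [hrepdef, if_pos rfl]
  set φ : G₁.ConnectedComponent ⊕ Fin 2 → G₂.ConnectedComponent := fun z =>
    Sum.elim (fun c => ec (rep c))
      (fun j => if j = 0 then G₂.connectedComponentMk ⟨bPrime, m3⟩ else ec ⟨tgt₀, htgt⟩) z
    with hφdef
  have hsrccover : ∃ z, φ z = G₂.connectedComponentMk ⟨extC src₀, m1⟩ := by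
    refine ⟨Sum.inl (G₁.connectedComponentMk ⟨src₀, hsrc⟩), ?_⟩
    simp only [hφdef, Sum.elim_inl]
    rw [hreps]
    exact ec_pos _ m1
  have hφ : Function.Surjective φ := by
    intro K
    obtain ⟨v, rfl⟩ := K.exists_rep
    have hcover : ∀ (y : σ → ℕ) (hy : y ∈ R.complexes) (h' : extC y ∈ (R₂).complexes),
        ∃ z, φ z = G₂.connectedComponentMk ⟨extC y, h'⟩ := by
      intro y hy h'
      have hreach : G₁.Reachable (rep (G₁.connectedComponentMk ⟨y, hy⟩)) ⟨y, hy⟩ :=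
        SimpleGraph.ConnectedComponent.exact (hrep _)
      obtain ⟨w⟩ := hreach
      rcases ML _ _ w h' with h | h | h | h
      · refine ⟨Sum.inl (G₁.connectedComponentMk ⟨y, hy⟩), ?_⟩
        simp only [hφdef, Sum.elim_inl]
        exact h.symm
      · refine ⟨Sum.inr 0, ?_⟩
        simp only [hφdef, Sum.elim_inr, eq_self_iff_true, if_true]
        exact h.symm
      · refine ⟨Sum.inr 1, ?_⟩
        simp only [hφdef, Sum.elim_inr]
        rw [if_neg (by decide : ¬ (1 : Fin 2) = 0)]
        exact h.symm
      · obtain ⟨z, hz⟩ := hsrccover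
        refine ⟨z, ?_⟩
        rw [hz]
        exact h.symm
    rcases mem_complexes₂ R A B p₁ p₂ C₁ C₂ hr₁ v.2 with ⟨y, hy, hval⟩ | hval | hval | hval
    · have hv : v = ⟨extC y, hval ▸ v.2⟩ := Subtype.ext hval
      rw [hv]
      exact hcover y hy _
    · have hv : v = ⟨extB' C₂, m2⟩ := Subtype.ext hval
      obtain ⟨z, hz⟩ := hsrccover
      refine ⟨z, ?_⟩
      rw [hz, hv]
      exact comp_eq_of_pair (R₂) (a := ⟨extC src₀, m1⟩) (b := ⟨extB' C₂, m2⟩)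
        (hr₁'mem R A B p₁ p₂ C₁ C₂)
    · have hv : v = ⟨bPrime, m3⟩ := Subtype.ext hval
      refine ⟨Sum.inr 0, ?_⟩
      simp only [hφdef, Sum.elim_inr, eq_self_iff_true, if_true]
      rw [hv]
      rfl
    · have hv : v = ⟨extC (mono B p₂), m4⟩ := Subtype.ext hval
      refine ⟨Sum.inr 0, ?_⟩
      simp only [hφdef, Sum.elim_inr, eq_self_iff_true, if_true]
      rw [hv]
      exact comp_eq_of_pair (R₂) (a := ⟨bPrime, m3⟩) (b := ⟨extC (mono B p₂), m4⟩)
        (hr₂'mem R A B p₁ p₂ C₁ C₂)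
  have hle := Nat.card_le_card_of_surjective φ hφ
  rw [Nat.card_sum] at hle
  have h2 : Nat.card (Fin 2) = 2 := by simp
  rw [h2] at hle
  exact hle

end

end SFAux

/-- One application of the sign fixing algorithm to the bad submatrix given by
the reactions `p₁A + C₁ → p₂B + C₂` and `p₃A + p₄B + C₃ → C₄` satisfies
`Δs = 1`, `1 ≤ Δn ≤ 3` and `Δℓ ≤ 2`. -/
theorem signFixCRN_complexes_linkage_rank {d : ℕ} (N₁ : CRN (Fin d))
    (A B : Fin d) (hAB : A ≠ B)
    (p₁ p₂ p₃ p₄ : ℕ) (hp₁ : 0 < p₁) (hp₂ : 0 < p₂) (hp₃ : 0 < p₃) (hp₄ : 0 < p₄)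
    (C₁ C₂ C₃ C₄ : Fin d → ℕ)
    (hC₁ : C₁ A = 0 ∧ C₁ B = 0) (hC₂ : C₂ A = 0 ∧ C₂ B = 0)
    (hC₃ : C₃ A = 0 ∧ C₃ B = 0) (hC₄ : C₄ A = 0 ∧ C₄ B = 0)
    (hr₁ : ((fun i => mono A p₁ i + C₁ i), (fun i => mono B p₂ i + C₂ i))
      ∈ N₁.reactions)
    (hr₂ : ((fun i => mono A p₃ i + mono B p₄ i + C₃ i), C₄) ∈ N₁.reactions) :
    (signFixCRN N₁ A B p₁ p₂ C₁ C₂).srank = N₁.srank + 1 ∧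
    1 ≤ ((signFixCRN N₁ A B p₁ p₂ C₁ C₂).numComplexes : ℤ) - N₁.numComplexes ∧
    ((signFixCRN N₁ A B p₁ p₂ C₁ C₂).numComplexes : ℤ) - N₁.numComplexes ≤ 3 ∧
    ((signFixCRN N₁ A B p₁ p₂ C₁ C₂).numLinkage : ℤ) - N₁.numLinkage ≤ 2 := by
  refine ⟨SFAux.srank_aux N₁ A B p₁ p₂ C₁ C₂ hr₁, ?_, ?_, ?_⟩
  · have h := SFAux.numComplexes_lb N₁ A B p₁ p₂ C₁ C₂ hr₁
    omega
  · have h := SFAux.numComplexes_ub N₁ A B p₁ p₂ C₁ C₂ hr₁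
    omega
  · have h := SFAux.linkage_ub N₁ A B p₁ p₂ C₁ C₂ hr₁
    omega
end

section
/- Let S₁ be a stoichiometric matrix with a bad submatrix and S₂ its sign fixing matrix with respect to that bad submatrix. Then the deficiencies satisfy 0 ≤ δ₂ - δ₁ ≤ 1, where δᵢ = nᵢ - ℓᵢ - sᵢ. -/
set_option linter.unusedSectionVars false


open Finset

variable {σ : Type} [DecidableEq σ] [Fintype σ]

open SimpleGraph

noncomputable def ncomp {V : Type*} (G : SimpleGraph V) : ℕ := Nat.card G.ConnectedComponent

lemma reach_of_adj_reach {V W : Type*} {G : SimpleGraph V} {G' : SimpleGraph W} (f : V → W)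
    (hf : ∀ a b, G.Adj a b → G'.Reachable (f a) (f b)) {a b : V} (h : G.Reachable a b) :
    G'.Reachable (f a) (f b) := by
  obtain ⟨w⟩ := h
  induction w with
  | nil => exact Reachable.refl _
  | cons h p ih => exact (hf _ _ h).trans ih

lemma ncomp_eq_of_maps {V W : Type*} {G : SimpleGraph V} {G' : SimpleGraph W}
    (f : V → W) (g : W → V)
    (hf : ∀ a b, G.Adj a b → G'.Reachable (f a) (f b))
    (hg : ∀ a b, G'.Adj a b → G.Reachable (g a) (g b))
    (hgf : ∀ v, G.Reachable (g (f v)) v)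
    (hfg : ∀ w, G'.Reachable (f (g w)) w) :
    ncomp G = ncomp G' := by
  refine Nat.card_congr ⟨Quot.lift (fun v => G'.connectedComponentMk (f v))
      (fun a b h => ConnectedComponent.sound (reach_of_adj_reach f hf h)),
    Quot.lift (fun w => G.connectedComponentMk (g w))
      (fun a b h => ConnectedComponent.sound (reach_of_adj_reach g hg h)), ?_, ?_⟩
  · refine ConnectedComponent.ind (fun v => ?_)
    exact ConnectedComponent.sound (hgf v)
  · refine ConnectedComponent.ind (fun w => ?_)
    exact ConnectedComponent.sound (hfg w)

lemma ncomp_option {V : Type*} [Finite V] (G : SimpleGraph V) (G' : SimpleGraph (Option V))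
    (hsome : ∀ a b, G'.Adj (some a) (some b) ↔ G.Adj a b)
    (hnone : ∀ a, ¬ G'.Adj none a) :
    ncomp G' = ncomp G + 1 := by
  have key : ∀ u v, G'.Reachable u v →
      (u = none ∧ v = none) ∨ (∃ a b, u = some a ∧ v = some b ∧ G.Reachable a b) := by
    intro u v h
    obtain ⟨w⟩ := h
    induction w with
    | @nil u =>
      cases u with
      | none => exact Or.inl ⟨rfl, rfl⟩
      | some a => exact Or.inr ⟨a, a, rfl, rfl, Reachable.refl _⟩
    | @cons u m v h p ih =>
      cases u with
      | none => exact absurd h (hnone m)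
      | some a =>
        cases m with
        | none => exact absurd h.symm (hnone (some a))
        | some c =>
          rcases ih with ⟨h1, h2⟩ | ⟨a', b, h1, h2, h3⟩
          · exact absurd h1 (by simp)
          · obtain rfl : c = a' := by simpa using h1
            exact Or.inr ⟨a, b, rfl, h2, ((hsome a c).mp h).reachable.trans h3⟩
  have hcard : Nat.card G'.ConnectedComponent = Nat.card (Option G.ConnectedComponent) := by
    refine Nat.card_congr ⟨Quot.lift (fun v => Option.map G.connectedComponentMk v) ?_,
      fun o => Option.elim o (G'.connectedComponentMk none)
        (fun c => c.map ⟨some, fun h => (hsome _ _).mpr h⟩), ?_, ?_⟩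
    · intro a b hab
      rcases key a b hab with ⟨rfl, rfl⟩ | ⟨x, y, rfl, rfl, h3⟩
      · rfl
      · simpa using ConnectedComponent.sound h3
    · refine ConnectedComponent.ind (fun v => ?_)
      cases v with
      | none => rfl
      | some a => rfl
    · intro o
      cases o with
      | none => rfl
      | some c =>
        refine ConnectedComponent.ind (fun v => ?_) c
        rfl
  have hfin : Finite G.ConnectedComponent := Quot.finite _
  haveI := Fintype.ofFinite G.ConnectedComponent
  rw [ncomp, ncomp, hcard, Nat.card_eq_fintype_card, Nat.card_eq_fintype_card,
    Fintype.card_option]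

lemma ncomp_le_of_le {V : Type*} [Finite V] {G G' : SimpleGraph V} (h : G ≤ G') :
    ncomp G' ≤ ncomp G := by
  haveI : Finite G.ConnectedComponent := Quot.finite _
  refine Nat.card_le_card_of_surjective
    (ConnectedComponent.map ⟨id, fun hadj => h hadj⟩) ?_
  exact ConnectedComponent.ind (fun v => ⟨G.connectedComponentMk v, rfl⟩)

lemma ncomp_le_add_one {V : Type*} [Finite V] {G G' : SimpleGraph V} {a b : V}
    (h : ∀ u v, G'.Adj u v ↔ G.Adj u v ∨ (u ≠ v ∧ ((u = a ∧ v = b) ∨ (u = b ∧ v = a)))) :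
    ncomp G ≤ ncomp G' + 1 := by
  classical
  have key : ∀ u v, G'.Reachable u v → G.Reachable u v ∨
      (G.Reachable u a ∧ G.Reachable b v) ∨ (G.Reachable u b ∧ G.Reachable a v) := by
    intro u v hr; obtain ⟨w⟩ := hr
    induction w with
    | nil => exact Or.inl (Reachable.refl _)
    | @cons u m v hadj p ih =>
      rcases (h u m).mp hadj with h1 | ⟨hne, ⟨rfl, rfl⟩ | ⟨rfl, rfl⟩⟩
      · rcases ih with h2 | ⟨h2, h3⟩ | ⟨h2, h3⟩
        · exact Or.inl (h1.reachable.trans h2)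
        · exact Or.inr (Or.inl ⟨h1.reachable.trans h2, h3⟩)
        · exact Or.inr (Or.inr ⟨h1.reachable.trans h2, h3⟩)
      · rcases ih with h2 | ⟨h2, h3⟩ | ⟨h2, h3⟩
        · exact Or.inr (Or.inl ⟨Reachable.refl _, h2⟩)
        · exact Or.inl (h2.symm.trans h3)
        · exact Or.inl h3
      · rcases ih with h2 | ⟨h2, h3⟩ | ⟨h2, h3⟩
        · exact Or.inr (Or.inr ⟨Reachable.refl _, h2⟩)
        · exact Or.inl h3
        · exact Or.inl (h2.symm.trans h3)
  have hGle : G ≤ G' := fun {u v} huv => (h u v).mpr (Or.inl huv)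
  haveI : Finite G.ConnectedComponent := Quot.finite _
  haveI : Finite G'.ConnectedComponent := Quot.finite _
  haveI := Fintype.ofFinite G.ConnectedComponent
  haveI := Fintype.ofFinite G'.ConnectedComponent
  set m : G.ConnectedComponent → G'.ConnectedComponent :=
    ConnectedComponent.map ⟨id, fun hadj => hGle hadj⟩ with hm
  have hminj : ∀ c d, c ≠ G.connectedComponentMk a → d ≠ G.connectedComponentMk a →
      m c = m d → c = d := by
    intro c d hc hd hcd
    obtain ⟨u, rfl⟩ := Quot.exists_rep c
    obtain ⟨v, rfl⟩ := Quot.exists_rep d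
    have hr : G'.Reachable u v := ConnectedComponent.exact hcd
    rcases key u v hr with h1 | ⟨h1, h2⟩ | ⟨h1, h2⟩
    · exact ConnectedComponent.sound h1
    · exact absurd (ConnectedComponent.sound h1) hc
    · exact absurd (ConnectedComponent.sound h2.symm) hd
  rw [ncomp, ncomp, Nat.card_eq_fintype_card, Nat.card_eq_fintype_card]
  have h1 : (Finset.univ.erase (G.connectedComponentMk a)).card ≤
      Fintype.card G'.ConnectedComponent := by
    rw [← Finset.card_univ]
    refine Finset.card_le_card_of_injOn m (fun x _ => Finset.mem_univ _) ?_
    intro x hx y hy hxy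
    exact hminj x y (Finset.mem_erase.mp hx).1 (Finset.mem_erase.mp hy).1 hxy
  have h2 : Fintype.card G.ConnectedComponent =
      (Finset.univ.erase (G.connectedComponentMk a)).card + 1 := by
    rw [Finset.card_erase_add_one (Finset.mem_univ _), Finset.card_univ]
  omega

def relGraph {τ : Type*} (V : Finset τ) (E : Finset (τ × τ)) : SimpleGraph {c // c ∈ V} :=
  SimpleGraph.fromRel (fun a b => ((a : τ), (b : τ)) ∈ E)

lemma relGraph_adj {τ : Type*} {V : Finset τ} {E : Finset (τ × τ)} {a b : {c // c ∈ V}} :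
    (relGraph V E).Adj a b ↔ a ≠ b ∧ (((a : τ), (b : τ)) ∈ E ∨ ((b : τ), (a : τ)) ∈ E) := by
  simp [relGraph]

lemma ncomp_relGraph_insert_isolated {τ : Type*} [DecidableEq τ] {V : Finset τ}
    {E : Finset (τ × τ)} {v : τ} (hv : v ∉ V)
    (h1 : ∀ e ∈ E, e.1 ≠ v) (h2 : ∀ e ∈ E, e.2 ≠ v) :
    ncomp (relGraph (insert v V) E) = ncomp (relGraph V E) + 1 := by
  classical
  set e := Finset.subtypeInsertEquivOption hv with he
  set G' : SimpleGraph (Option {c // c ∈ V}) :=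
    SimpleGraph.comap e.symm (relGraph (insert v V) E) with hG'
  have step1 : ncomp (relGraph (insert v V) E) = ncomp G' := by
    refine ncomp_eq_of_maps e e.symm ?_ ?_ ?_ ?_
    · intro a b hab
      apply SimpleGraph.Adj.reachable
      show (relGraph (insert v V) E).Adj (e.symm (e a)) (e.symm (e b))
      simpa using hab
    · intro a b hab
      exact SimpleGraph.Adj.reachable
        (hab : (relGraph (insert v V) E).Adj (e.symm a) (e.symm b))
    · intro w
      rw [Equiv.symm_apply_apply]
    · intro w
      show G'.Reachable (e (e.symm w)) w
      rw [Equiv.apply_symm_apply]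
  have step2 : ncomp G' = ncomp (relGraph V E) + 1 := by
    refine ncomp_option _ _ ?_ ?_
    · intro a b
      show (relGraph (insert v V) E).Adj (e.symm (some a)) (e.symm (some b)) ↔ _
      have ha : (e.symm (some a) : τ) = (a : τ) := rfl
      have hb : (e.symm (some b) : τ) = (b : τ) := rfl
      rw [relGraph_adj, relGraph_adj, ha, hb]
      constructor
      · rintro ⟨hne, h⟩
        exact ⟨fun hh => hne (by simp [hh]), h⟩
      · rintro ⟨hne, h⟩
        refine ⟨fun hh => hne ?_, h⟩
        apply Subtype.ext
        have := congrArg (Subtype.val) hh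
        exact this
    · intro a hadj
      have hadj' : (relGraph (insert v V) E).Adj (e.symm none) (e.symm a) := hadj
      rw [relGraph_adj] at hadj'
      have hnone : (e.symm none : τ) = v := rfl
      rw [hnone] at hadj'
      rcases hadj'.2 with h | h
      · exact h1 _ h rfl
      · exact h2 _ h rfl
  rw [step1, step2]

lemma ncomp_relGraph_insert_edge_le {τ : Type*} [DecidableEq τ] {V : Finset τ}
    {E : Finset (τ × τ)} {x y : τ} :
    ncomp (relGraph V (insert (x, y) E)) ≤ ncomp (relGraph V E) := by
  refine ncomp_le_of_le (fun {a b} hab => ?_)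
  rw [relGraph_adj] at *
  simp only [Finset.mem_insert] at *
  tauto

lemma ncomp_relGraph_le_insert_edge {τ : Type*} [DecidableEq τ] {V : Finset τ}
    {E : Finset (τ × τ)} {x y : τ} (hx : x ∈ V) (hy : y ∈ V) :
    ncomp (relGraph V E) ≤ ncomp (relGraph V (insert (x, y) E)) + 1 := by
  refine ncomp_le_add_one (a := ⟨x, hx⟩) (b := ⟨y, hy⟩) ?_
  intro u v
  rw [relGraph_adj, relGraph_adj]
  simp only [Finset.mem_insert, Prod.mk.injEq, ne_eq, Subtype.ext_iff]
  tauto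

def extL (σ : Type) [Fintype σ] : (σ → ℝ) →ₗ[ℝ] (Option σ → ℝ) where
  toFun v := fun o => Option.elim o 0 v
  map_add' u v := by funext o; cases o <;> simp
  map_smul' c v := by funext o; cases o <;> simp

lemma extL_injective (σ : Type) [Fintype σ] : Function.Injective (extL σ) := by
  intro u v h
  funext i
  exact congrFun h (some i)

lemma finrank_span_ext {σ : Type} [Fintype σ] (T : Set (σ → ℝ))
    (w : Option σ → ℝ) (hw : w none ≠ 0) :
    Module.finrank ℝ (Submodule.span ℝ ((extL σ '' T) ∪ {w})) =
      Module.finrank ℝ (Submodule.span ℝ T) + 1 := by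
  rw [Submodule.span_union, Submodule.span_image]
  set p := Submodule.map (extL σ) (Submodule.span ℝ T) with hp
  have h1 : p ⊓ Submodule.span ℝ {w} = ⊥ := by
    rw [eq_bot_iff]
    rintro x hx
    obtain ⟨hx1, hx2⟩ := Submodule.mem_inf.mp hx
    obtain ⟨v, hv, rfl⟩ := hx1
    obtain ⟨c, hc⟩ := Submodule.mem_span_singleton.mp hx2
    have hnone : extL σ v none = 0 := rfl
    have : c * w none = 0 := by
      have := congrFun hc none
      simpa using this.trans hnone
    have hc0 : c = 0 := by
      rcases mul_eq_zero.mp this with h | h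
      · exact h
      · exact absurd h hw
    rw [← hc, hc0, zero_smul]
    exact Submodule.zero_mem ⊥
  have h2 := Submodule.finrank_sup_add_finrank_inf_eq p (Submodule.span ℝ {w})
  rw [h1, finrank_bot] at h2
  have hw0 : w ≠ 0 := fun h => hw (by rw [h]; rfl)
  rw [finrank_span_singleton hw0] at h2
  have h3 : Module.finrank ℝ p = Module.finrank ℝ (Submodule.span ℝ T) := by
    exact (LinearEquiv.finrank_eq
      (Submodule.equivMapOfInjective (extL σ) (extL_injective σ) (Submodule.span ℝ T))).symm
  omega
-- helpers
lemma extC_injective : Function.Injective (extC (σ := σ)) := by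
  intro u v h
  funext i
  exact congrFun h (some i)

lemma extC_none (y : σ → ℕ) : extC y none = 0 := rfl
lemma extB'_none (C : σ → ℕ) : extB' C none = 1 := rfl
lemma bPrime_none : bPrime (σ := σ) none = 1 := rfl

lemma extC_ne_extB' (y C : σ → ℕ) : extC y ≠ extB' C := by
  intro h; exact absurd (congrFun h none) (by simp [extC, extB'])

lemma extC_ne_bPrime (y : σ → ℕ) : extC y ≠ bPrime := by
  intro h; exact absurd (congrFun h none) (by simp [extC, bPrime])

lemma extB'_zero : extB' (fun _ : σ => 0) = bPrime := by
  funext o; cases o <;> rfl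

lemma complexes_eq (R : CRN σ) {a b : σ → ℕ} (h : (a, b) ∈ R.reactions) :
    R.complexes = insert b (insert a
      ((R.reactions.erase (a, b)).image Prod.fst ∪
       (R.reactions.erase (a, b)).image Prod.snd)) := by
  conv_lhs => rw [CRN.complexes, ← Finset.insert_erase h]
  rw [Finset.image_insert, Finset.image_insert]
  ext z
  simp only [Finset.mem_union, Finset.mem_insert]
  tauto



lemma signFix_complexes (R : CRN σ) (A B : σ) (p₁ p₂ : ℕ) (C₁ C₂ : σ → ℕ) :
    (signFixCRN R A B p₁ p₂ C₁ C₂).complexes =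
      (insert (mono B p₂) (insert (fun i => mono A p₁ i + C₁ i)
        ((R.reactions.erase
            ((fun i => mono A p₁ i + C₁ i), (fun i => mono B p₂ i + C₂ i))).image Prod.fst ∪
         (R.reactions.erase
            ((fun i => mono A p₁ i + C₁ i), (fun i => mono B p₂ i + C₂ i))).image Prod.snd))).image extC
      ∪ {extB' C₂, bPrime} := by
  have h : (signFixCRN R A B p₁ p₂ C₁ C₂).reactions =
      (R.reactions.erase
        ((fun i => mono A p₁ i + C₁ i), (fun i => mono B p₂ i + C₂ i))).image
        (fun r => (extC r.1, extC r.2)) ∪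
      {(extC (fun i => mono A p₁ i + C₁ i), extB' C₂), (bPrime, extC (mono B p₂))} := rfl
  have hc1 : (Prod.fst ∘ (fun r : (σ → ℕ) × (σ → ℕ) => (extC r.1, extC r.2)))
      = (extC ∘ Prod.fst) := rfl
  have hc2 : (Prod.snd ∘ (fun r : (σ → ℕ) × (σ → ℕ) => (extC r.1, extC r.2)))
      = (extC ∘ Prod.snd) := rfl
  rw [CRN.complexes, h, Finset.image_union, Finset.image_union, Finset.image_image,
    Finset.image_image, hc1, hc2, Finset.image_insert, Finset.image_singleton,
    Finset.image_insert, Finset.image_singleton, Finset.image_insert, Finset.image_insert,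
    Finset.image_union, ← Finset.image_image, ← Finset.image_image (g := extC) (f := Prod.snd)]
  ext z
  simp only [Finset.mem_union, Finset.mem_insert, Finset.mem_singleton]
  tauto

def fRaw (A B : σ) (p₁ p₂ : ℕ) (C₁ : σ → ℕ) (w : Option σ → ℕ) : σ → ℕ :=
  if w none = 0 then (fun i => w (some i)) else
    if w = bPrime then mono B p₂ else (fun i => mono A p₁ i + C₁ i)

lemma fRaw_extC (A B : σ) (p₁ p₂ : ℕ) (C₁ : σ → ℕ) (w : σ → ℕ) :
    fRaw A B p₁ p₂ C₁ (extC w) = w := by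
  rw [fRaw, if_pos (show extC w none = 0 from rfl)]
  rfl

lemma fRaw_bPrime (A B : σ) (p₁ p₂ : ℕ) (C₁ : σ → ℕ) :
    fRaw A B p₁ p₂ C₁ bPrime = mono B p₂ := by
  rw [fRaw, if_neg (show ¬ bPrime (σ := σ) none = 0 by simp [bPrime]), if_pos rfl]

lemma fRaw_extB' (A B : σ) (p₁ p₂ : ℕ) (C₁ C₂ : σ → ℕ) (hbne : extB' C₂ ≠ bPrime) :
    fRaw A B p₁ p₂ C₁ (extB' C₂) = fun i => mono A p₁ i + C₁ i := by
  rw [fRaw, if_neg (show ¬ extB' C₂ none = 0 by simp [extB']), if_neg hbne]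

lemma reach_of_eq {V : Type*} {G : SimpleGraph V} {u v : V} (h : u = v) : G.Reachable u v :=
  h ▸ SimpleGraph.Reachable.refl u

lemma ncomp_signFix_ne (R : CRN σ) (A B : σ) (p₁ p₂ : ℕ) (C₁ C₂ : σ → ℕ)
    (hbne : extB' C₂ ≠ bPrime) :
    ncomp (relGraph (signFixCRN R A B p₁ p₂ C₁ C₂).complexes
        (signFixCRN R A B p₁ p₂ C₁ C₂).reactions) =
    ncomp (relGraph
      (insert (mono B p₂) (insert (fun i => mono A p₁ i + C₁ i)
        ((R.reactions.erase
            ((fun i => mono A p₁ i + C₁ i), (fun i => mono B p₂ i + C₂ i))).image Prod.fst ∪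
         (R.reactions.erase
            ((fun i => mono A p₁ i + C₁ i), (fun i => mono B p₂ i + C₂ i))).image Prod.snd)))
      (R.reactions.erase
        ((fun i => mono A p₁ i + C₁ i), (fun i => mono B p₂ i + C₂ i)))) := by
  have hV₂ := signFix_complexes R A B p₁ p₂ C₁ C₂
  set x1 : σ → ℕ := fun i => mono A p₁ i + C₁ i with hx1def
  set yy : σ → ℕ := mono B p₂ with hyydef
  set x2 : σ → ℕ := fun i => mono B p₂ i + C₂ i with hx2def
  set Es : Finset ((σ → ℕ) × (σ → ℕ)) := R.reactions.erase (x1, x2) with hEsdef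
  set W : Finset (σ → ℕ) := insert yy (insert x1 (Es.image Prod.fst ∪ Es.image Prod.snd))
    with hWdef
  set N₂ := signFixCRN R A B p₁ p₂ C₁ C₂ with hN₂def
  have hE₂ : N₂.reactions =
      Es.image (fun r => (extC r.1, extC r.2)) ∪
        {(extC x1, extB' C₂), (bPrime, extC yy)} := rfl
  have hx1W : x1 ∈ W := Finset.mem_insert_of_mem (Finset.mem_insert_self _ _)
  have hyyW : yy ∈ W := Finset.mem_insert_self _ _
  have hq₁ : (extC x1, extB' C₂) ∈ N₂.reactions := by
    rw [hE₂]; exact Finset.mem_union_right _ (Finset.mem_insert_self _ _)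
  have hq₂ : (bPrime, extC yy) ∈ N₂.reactions := by
    rw [hE₂]
    exact Finset.mem_union_right _ (Finset.mem_insert_of_mem (Finset.mem_singleton_self _))
  have hWsub : ∀ e ∈ Es, e.1 ∈ W ∧ e.2 ∈ W := by
    intro e he
    constructor
    · exact Finset.mem_insert_of_mem (Finset.mem_insert_of_mem
        (Finset.mem_union_left _ (Finset.mem_image_of_mem _ he)))
    · exact Finset.mem_insert_of_mem (Finset.mem_insert_of_mem
        (Finset.mem_union_right _ (Finset.mem_image_of_mem _ he)))
  have hfm : ∀ zv, zv ∈ N₂.complexes → fRaw A B p₁ p₂ C₁ zv ∈ W := by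
    intro zv hzv
    rw [hV₂] at hzv
    rcases Finset.mem_union.mp hzv with h | h
    · obtain ⟨w, hw, rfl⟩ := Finset.mem_image.mp h
      rw [fRaw_extC]; exact hw
    · rcases Finset.mem_insert.mp h with rfl | h
      · rw [fRaw_extB' A B p₁ p₂ C₁ C₂ hbne]; exact hx1W
      · rw [Finset.mem_singleton.mp h, fRaw_bPrime]; exact hyyW
  have hgm : ∀ wv, wv ∈ W → extC wv ∈ N₂.complexes := by
    intro wv hwv
    rw [hV₂]
    exact Finset.mem_union_left _ (Finset.mem_image_of_mem _ hwv)
  refine ncomp_eq_of_maps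
    (fun z => ⟨fRaw A B p₁ p₂ C₁ z.1, hfm z.1 z.2⟩)
    (fun w => ⟨extC w.1, hgm w.1 w.2⟩) ?_ ?_ ?_ ?_
  · -- hf
    have hsuff : ∀ u v : {c // c ∈ N₂.complexes}, ((u : Option σ → ℕ), (v : Option σ → ℕ)) ∈ N₂.reactions →
        u ≠ v → (relGraph W Es).Reachable ⟨fRaw A B p₁ p₂ C₁ u.1, hfm u.1 u.2⟩
          ⟨fRaw A B p₁ p₂ C₁ v.1, hfm v.1 v.2⟩ := by
      intro u v huv hne
      rw [hE₂] at huv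
      rcases Finset.mem_union.mp huv with h | h
      · obtain ⟨r, hr, hrq⟩ := Finset.mem_image.mp h
        obtain ⟨hu, hv⟩ := Prod.mk.injEq .. ▸ hrq
        by_cases h12 : r.1 = r.2
        · exact absurd (Subtype.ext (hu ▸ hv ▸ h12 ▸ rfl)) hne
        · refine SimpleGraph.Adj.reachable ?_
          rw [relGraph_adj]
          refine ⟨?_, Or.inl ?_⟩
          · intro hh
            apply h12
            have := congrArg Subtype.val hh
            simp only [← hu, ← hv, fRaw_extC] at this
            exact this
          · show (fRaw A B p₁ p₂ C₁ u.1, fRaw A B p₁ p₂ C₁ v.1) ∈ Es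
            rw [← hu, ← hv, fRaw_extC, fRaw_extC, Prod.mk.eta]
            exact hr
      · rcases Finset.mem_insert.mp h with h | h
        · obtain ⟨hu, hv⟩ := Prod.mk.injEq .. ▸ h
          have : (⟨fRaw A B p₁ p₂ C₁ u.1, hfm u.1 u.2⟩ : {c // c ∈ W}) =
              ⟨fRaw A B p₁ p₂ C₁ v.1, hfm v.1 v.2⟩ := by
            apply Subtype.ext
            show fRaw A B p₁ p₂ C₁ u.1 = fRaw A B p₁ p₂ C₁ v.1
            rw [hu, hv, fRaw_extC, fRaw_extB' A B p₁ p₂ C₁ C₂ hbne]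
          exact reach_of_eq this
        · rw [Finset.mem_singleton] at h
          obtain ⟨hu, hv⟩ := Prod.mk.injEq .. ▸ h
          have : (⟨fRaw A B p₁ p₂ C₁ u.1, hfm u.1 u.2⟩ : {c // c ∈ W}) =
              ⟨fRaw A B p₁ p₂ C₁ v.1, hfm v.1 v.2⟩ := by
            apply Subtype.ext
            show fRaw A B p₁ p₂ C₁ u.1 = fRaw A B p₁ p₂ C₁ v.1
            rw [hu, hv, fRaw_bPrime, fRaw_extC]
          exact reach_of_eq this
    intro a b hab
    rw [relGraph_adj] at hab
    obtain ⟨hne, hE | hE⟩ := hab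
    · exact hsuff a b hE hne
    · exact (hsuff b a hE hne.symm).symm
  · -- hg
    have hsuff : ∀ u v : {c // c ∈ W}, ((u : σ → ℕ), (v : σ → ℕ)) ∈ Es → u ≠ v →
        (relGraph N₂.complexes N₂.reactions).Reachable ⟨extC u.1, hgm u.1 u.2⟩
          ⟨extC v.1, hgm v.1 v.2⟩ := by
      intro u v huv hne
      refine SimpleGraph.Adj.reachable ?_
      rw [relGraph_adj]
      refine ⟨?_, Or.inl ?_⟩
      · intro hh
        apply hne
        apply Subtype.ext
        exact extC_injective (congrArg Subtype.val hh)
      · show (extC u.1, extC v.1) ∈ N₂.reactions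
        rw [hE₂]
        exact Finset.mem_union_left _ (Finset.mem_image_of_mem _ huv)
    intro a b hab
    rw [relGraph_adj] at hab
    obtain ⟨hne, hE | hE⟩ := hab
    · exact hsuff a b hE hne
    · exact (hsuff b a hE hne.symm).symm
  · -- hgf
    intro z
    show (relGraph N₂.complexes N₂.reactions).Reachable
      ⟨extC (fRaw A B p₁ p₂ C₁ z.1), hgm _ (hfm _ z.2)⟩ z
    have hz : z.val ∈ Finset.image extC W ∪ {extB' C₂, bPrime} := by
      rw [← hV₂]; exact z.2
    rcases Finset.mem_union.mp hz with h | h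
    · obtain ⟨w, hw, hwz⟩ := Finset.mem_image.mp h
      have heq : (⟨extC (fRaw A B p₁ p₂ C₁ z.1), hgm _ (hfm _ z.2)⟩ :
          {c // c ∈ N₂.complexes}) = z :=
        Subtype.ext (by show extC (fRaw A B p₁ p₂ C₁ z.1) = z.1; rw [← hwz, fRaw_extC])
      exact reach_of_eq heq
    · rcases Finset.mem_insert.mp h with h | h
      · refine SimpleGraph.Adj.reachable ?_
        rw [relGraph_adj]
        constructor
        · intro hh
          have h3 : extC (fRaw A B p₁ p₂ C₁ z.val) = z.val := congrArg Subtype.val hh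
          rw [h] at h3
          exact extC_ne_extB' _ _ h3
        · left
          show (extC (fRaw A B p₁ p₂ C₁ z.1), (z : Option σ → ℕ)) ∈ N₂.reactions
          rw [h, fRaw_extB' A B p₁ p₂ C₁ C₂ hbne]
          exact hq₁
      · rw [Finset.mem_singleton] at h
        refine (SimpleGraph.Adj.reachable ?_).symm
        rw [relGraph_adj]
        constructor
        · intro hh
          have h3 : extC (fRaw A B p₁ p₂ C₁ z.val) = z.val := (congrArg Subtype.val hh).symm
          rw [h] at h3
          exact extC_ne_bPrime _ h3
        · left
          show ((z : Option σ → ℕ), extC (fRaw A B p₁ p₂ C₁ z.1)) ∈ N₂.reactions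
          rw [h, fRaw_bPrime]
          exact hq₂
  · -- hfg
    intro w
    show (relGraph W Es).Reachable ⟨fRaw A B p₁ p₂ C₁ (extC w.1), hfm _ (hgm _ w.2)⟩ w
    have heq : (⟨fRaw A B p₁ p₂ C₁ (extC w.1), hfm _ (hgm _ w.2)⟩ : {c // c ∈ W}) = w :=
      Subtype.ext (by show fRaw A B p₁ p₂ C₁ (extC w.1) = w.1; rw [fRaw_extC])
    exact reach_of_eq heq

lemma ncomp_signFix_zero (R : CRN σ) (A B : σ) (p₁ p₂ : ℕ) (C₁ : σ → ℕ)
    (hx1y : (fun i => mono A p₁ i + C₁ i) ≠ mono B p₂) :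
    ncomp (relGraph (signFixCRN R A B p₁ p₂ C₁ (fun _ => 0)).complexes
        (signFixCRN R A B p₁ p₂ C₁ (fun _ => 0)).reactions) =
    ncomp (relGraph
      (insert (mono B p₂) (insert (fun i => mono A p₁ i + C₁ i)
        ((R.reactions.erase
            ((fun i => mono A p₁ i + C₁ i), (fun i => mono B p₂ i + (fun _ : σ => 0) i))).image Prod.fst ∪
         (R.reactions.erase
            ((fun i => mono A p₁ i + C₁ i), (fun i => mono B p₂ i + (fun _ : σ => 0) i))).image Prod.snd)))
      (insert ((fun i => mono A p₁ i + C₁ i), mono B p₂)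
        (R.reactions.erase
          ((fun i => mono A p₁ i + C₁ i), (fun i => mono B p₂ i + (fun _ : σ => 0) i))))) := by
  have hV₂ := signFix_complexes R A B p₁ p₂ C₁ (fun _ => 0)
  rw [extB'_zero] at hV₂
  set x1 : σ → ℕ := fun i => mono A p₁ i + C₁ i with hx1def
  set yy : σ → ℕ := mono B p₂ with hyydef
  set x2 : σ → ℕ := fun i => mono B p₂ i + (fun _ : σ => 0) i with hx2def
  set Es : Finset ((σ → ℕ) × (σ → ℕ)) := R.reactions.erase (x1, x2) with hEsdef
  set Et : Finset ((σ → ℕ) × (σ → ℕ)) := insert (x1, yy) Es with hEtdef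
  set W : Finset (σ → ℕ) := insert yy (insert x1 (Es.image Prod.fst ∪ Es.image Prod.snd))
    with hWdef
  set N₂ := signFixCRN R A B p₁ p₂ C₁ (fun _ => 0) with hN₂def
  have hE₂ : N₂.reactions =
      Es.image (fun r => (extC r.1, extC r.2)) ∪
        {(extC x1, extB' (fun _ => 0)), (bPrime, extC yy)} := rfl
  rw [extB'_zero] at hE₂
  have hx1W : x1 ∈ W := Finset.mem_insert_of_mem (Finset.mem_insert_self _ _)
  have hyyW : yy ∈ W := Finset.mem_insert_self _ _
  have hq₁ : (extC x1, bPrime) ∈ N₂.reactions := by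
    rw [hE₂]; exact Finset.mem_union_right _ (Finset.mem_insert_self _ _)
  have hq₂ : (bPrime, extC yy) ∈ N₂.reactions := by
    rw [hE₂]
    exact Finset.mem_union_right _ (Finset.mem_insert_of_mem (Finset.mem_singleton_self _))
  have hfm : ∀ zv, zv ∈ N₂.complexes → fRaw A B p₁ p₂ C₁ zv ∈ W := by
    intro zv hzv
    rw [hV₂] at hzv
    rcases Finset.mem_union.mp hzv with h | h
    · obtain ⟨w, hw, rfl⟩ := Finset.mem_image.mp h
      rw [fRaw_extC]; exact hw
    · rcases Finset.mem_insert.mp h with rfl | h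
      · rw [fRaw_bPrime]; exact hyyW
      · rw [Finset.mem_singleton.mp h, fRaw_bPrime]; exact hyyW
  have hgm : ∀ wv, wv ∈ W → extC wv ∈ N₂.complexes := by
    intro wv hwv
    rw [hV₂]
    exact Finset.mem_union_left _ (Finset.mem_image_of_mem _ hwv)
  refine ncomp_eq_of_maps
    (fun z => ⟨fRaw A B p₁ p₂ C₁ z.1, hfm z.1 z.2⟩)
    (fun w => ⟨extC w.1, hgm w.1 w.2⟩) ?_ ?_ ?_ ?_
  · -- hf
    have hsuff : ∀ u v : {c // c ∈ N₂.complexes},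
        ((u : Option σ → ℕ), (v : Option σ → ℕ)) ∈ N₂.reactions →
        u ≠ v → (relGraph W Et).Reachable ⟨fRaw A B p₁ p₂ C₁ u.1, hfm u.1 u.2⟩
          ⟨fRaw A B p₁ p₂ C₁ v.1, hfm v.1 v.2⟩ := by
      intro u v huv hne
      rw [hE₂] at huv
      rcases Finset.mem_union.mp huv with h | h
      · obtain ⟨r, hr, hrq⟩ := Finset.mem_image.mp h
        obtain ⟨hu, hv⟩ := Prod.mk.injEq .. ▸ hrq
        by_cases h12 : r.1 = r.2
        · exact absurd (Subtype.ext (hu ▸ hv ▸ h12 ▸ rfl)) hne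
        · refine SimpleGraph.Adj.reachable ?_
          rw [relGraph_adj]
          refine ⟨?_, Or.inl ?_⟩
          · intro hh
            apply h12
            have := congrArg Subtype.val hh
            simp only [← hu, ← hv, fRaw_extC] at this
            exact this
          · show (fRaw A B p₁ p₂ C₁ u.1, fRaw A B p₁ p₂ C₁ v.1) ∈ Et
            rw [← hu, ← hv, fRaw_extC, fRaw_extC, Prod.mk.eta]
            exact Finset.mem_insert_of_mem hr
      · rcases Finset.mem_insert.mp h with h | h
        · obtain ⟨hu, hv⟩ := Prod.mk.injEq .. ▸ h
          refine SimpleGraph.Adj.reachable ?_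
          rw [relGraph_adj]
          refine ⟨?_, Or.inl ?_⟩
          · intro hh
            apply hx1y
            have h3 := congrArg Subtype.val hh
            simp only [hu, hv, fRaw_extC, fRaw_bPrime] at h3
            exact h3
          · show (fRaw A B p₁ p₂ C₁ u.1, fRaw A B p₁ p₂ C₁ v.1) ∈ Et
            rw [hu, hv, fRaw_extC, fRaw_bPrime]
            exact Finset.mem_insert_self _ _
        · rw [Finset.mem_singleton] at h
          obtain ⟨hu, hv⟩ := Prod.mk.injEq .. ▸ h
          have : (⟨fRaw A B p₁ p₂ C₁ u.1, hfm u.1 u.2⟩ : {c // c ∈ W}) =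
              ⟨fRaw A B p₁ p₂ C₁ v.1, hfm v.1 v.2⟩ := by
            apply Subtype.ext
            show fRaw A B p₁ p₂ C₁ u.1 = fRaw A B p₁ p₂ C₁ v.1
            rw [hu, hv, fRaw_bPrime, fRaw_extC]
          exact reach_of_eq this
    intro a b hab
    rw [relGraph_adj] at hab
    obtain ⟨hne, hE | hE⟩ := hab
    · exact hsuff a b hE hne
    · exact (hsuff b a hE hne.symm).symm
  · -- hg
    have hstep : (relGraph N₂.complexes N₂.reactions).Reachable
        ⟨extC x1, hgm x1 hx1W⟩ ⟨extC yy, hgm yy hyyW⟩ := by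
      have hb : bPrime ∈ N₂.complexes := by
        rw [hV₂]
        exact Finset.mem_union_right _ (Finset.mem_insert_self _ _)
      have a1 : (relGraph N₂.complexes N₂.reactions).Adj ⟨extC x1, hgm x1 hx1W⟩ ⟨bPrime, hb⟩ := by
        rw [relGraph_adj]
        exact ⟨fun hh => extC_ne_bPrime _ (congrArg Subtype.val hh), Or.inl hq₁⟩
      have a2 : (relGraph N₂.complexes N₂.reactions).Adj ⟨bPrime, hb⟩ ⟨extC yy, hgm yy hyyW⟩ := by
        rw [relGraph_adj]
        exact ⟨fun hh => extC_ne_bPrime _ (congrArg Subtype.val hh).symm, Or.inl hq₂⟩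
      exact a1.reachable.trans a2.reachable
    have hsuff : ∀ u v : {c // c ∈ W}, ((u : σ → ℕ), (v : σ → ℕ)) ∈ Et → u ≠ v →
        (relGraph N₂.complexes N₂.reactions).Reachable ⟨extC u.1, hgm u.1 u.2⟩
          ⟨extC v.1, hgm v.1 v.2⟩ := by
      intro u v huv hne
      rcases Finset.mem_insert.mp huv with h | h
      · obtain ⟨hu, hv⟩ := Prod.mk.injEq .. ▸ h
        have e1 : (⟨extC u.1, hgm u.1 u.2⟩ : {c // c ∈ N₂.complexes}) = ⟨extC x1, hgm x1 hx1W⟩ :=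
          Subtype.ext (by show extC u.1 = extC x1; rw [hu])
        have e2 : (⟨extC v.1, hgm v.1 v.2⟩ : {c // c ∈ N₂.complexes}) = ⟨extC yy, hgm yy hyyW⟩ :=
          Subtype.ext (by show extC v.1 = extC yy; rw [hv])
        rw [e1, e2]
        exact hstep
      · refine SimpleGraph.Adj.reachable ?_
        rw [relGraph_adj]
        refine ⟨?_, Or.inl ?_⟩
        · intro hh
          apply hne
          apply Subtype.ext
          exact extC_injective (congrArg Subtype.val hh)
        · show (extC u.1, extC v.1) ∈ N₂.reactions
          rw [hE₂]
          exact Finset.mem_union_left _ (Finset.mem_image_of_mem _ h)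
    intro a b hab
    rw [relGraph_adj] at hab
    obtain ⟨hne, hE | hE⟩ := hab
    · exact hsuff a b hE hne
    · exact (hsuff b a hE hne.symm).symm
  · -- hgf
    intro z
    show (relGraph N₂.complexes N₂.reactions).Reachable
      ⟨extC (fRaw A B p₁ p₂ C₁ z.1), hgm _ (hfm _ z.2)⟩ z
    have hz : z.val ∈ Finset.image extC W ∪ {bPrime, bPrime} := by
      rw [← hV₂]; exact z.2
    rcases Finset.mem_union.mp hz with h | h
    · obtain ⟨w, hw, hwz⟩ := Finset.mem_image.mp h
      have heq : (⟨extC (fRaw A B p₁ p₂ C₁ z.1), hgm _ (hfm _ z.2)⟩ :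
          {c // c ∈ N₂.complexes}) = z :=
        Subtype.ext (by show extC (fRaw A B p₁ p₂ C₁ z.1) = z.1; rw [← hwz, fRaw_extC])
      exact reach_of_eq heq
    · have h' : z.val = bPrime := by
        rcases Finset.mem_insert.mp h with h | h
        · exact h
        · exact Finset.mem_singleton.mp h
      refine (SimpleGraph.Adj.reachable ?_).symm
      rw [relGraph_adj]
      constructor
      · intro hh
        have h3 : extC (fRaw A B p₁ p₂ C₁ z.val) = z.val := (congrArg Subtype.val hh).symm
        rw [h'] at h3
        exact extC_ne_bPrime _ h3
      · left
        show ((z : Option σ → ℕ), extC (fRaw A B p₁ p₂ C₁ z.1)) ∈ N₂.reactions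
        rw [h', fRaw_bPrime]
        exact hq₂
  · -- hfg
    intro w
    show (relGraph W Et).Reachable ⟨fRaw A B p₁ p₂ C₁ (extC w.1), hfm _ (hgm _ w.2)⟩ w
    have heq : (⟨fRaw A B p₁ p₂ C₁ (extC w.1), hfm _ (hgm _ w.2)⟩ : {c // c ∈ W}) = w :=
      Subtype.ext (by show fRaw A B p₁ p₂ C₁ (extC w.1) = w.1; rw [fRaw_extC])
    exact reach_of_eq heq

lemma srank_signFix (R : CRN σ) (A B : σ) (p₁ p₂ : ℕ) (C₁ C₂ : σ → ℕ)
    (hr : ((fun i => mono A p₁ i + C₁ i), (fun i => mono B p₂ i + C₂ i)) ∈ R.reactions) :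
    (signFixCRN R A B p₁ p₂ C₁ C₂).srank = R.srank + 1 := by
  set x1 : σ → ℕ := fun i => mono A p₁ i + C₁ i with hx1def
  set x2 : σ → ℕ := fun i => mono B p₂ i + C₂ i with hx2def
  set yy : σ → ℕ := mono B p₂ with hyydef
  set w₁ : Option σ → ℝ := fun o => (extB' C₂ o : ℝ) - (extC x1 o : ℝ) with hw₁def
  set T₁ : Set (σ → ℝ) :=
    {v | ∃ r ∈ R.reactions, v = fun i => ((r.2 i : ℝ) - (r.1 i : ℝ))} with hT₁def
  have hE₂ : (signFixCRN R A B p₁ p₂ C₁ C₂).reactions =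
      (R.reactions.erase (x1, x2)).image (fun r => (extC r.1, extC r.2)) ∪
        {(extC x1, extB' C₂), (bPrime, extC yy)} := rfl
  have hq₁mem : (extC x1, extB' C₂) ∈ (signFixCRN R A B p₁ p₂ C₁ C₂).reactions := by
    rw [hE₂]; exact Finset.mem_union_right _ (Finset.mem_insert_self _ _)
  have hq₂mem : (bPrime, extC yy) ∈ (signFixCRN R A B p₁ p₂ C₁ C₂).reactions := by
    rw [hE₂]
    exact Finset.mem_union_right _ (Finset.mem_insert_of_mem (Finset.mem_singleton_self _))
  have hspan : Submodule.span ℝ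
      {v : Option σ → ℝ | ∃ r ∈ (signFixCRN R A B p₁ p₂ C₁ C₂).reactions,
        v = fun o => ((r.2 o : ℝ) - (r.1 o : ℝ))} =
      Submodule.span ℝ ((extL σ '' T₁) ∪ {w₁}) := by
    apply le_antisymm
    · rw [Submodule.span_le]
      rintro v ⟨r, hrm, rfl⟩
      rw [hE₂] at hrm
      rcases Finset.mem_union.mp hrm with h | h
      · obtain ⟨r', hr', rfl⟩ := Finset.mem_image.mp h
        have hv : (fun o => (((extC r'.1, extC r'.2).2 o : ℝ) - ((extC r'.1, extC r'.2).1 o : ℝ)))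
            = extL σ (fun i => ((r'.2 i : ℝ) - (r'.1 i : ℝ))) := by
          funext o; cases o <;> simp [extC, extL]
        rw [hv]
        exact Submodule.subset_span (Or.inl
          ⟨_, ⟨r', Finset.mem_of_mem_erase hr', rfl⟩, rfl⟩)
      · rcases Finset.mem_insert.mp h with rfl | h
        · exact Submodule.subset_span (Or.inr rfl)
        · rw [Finset.mem_singleton.mp h]
          have hv : (fun o => (((bPrime (σ := σ), extC yy).2 o : ℝ) - ((bPrime (σ := σ), extC yy).1 o : ℝ)))
              = extL σ (fun i => ((x2 i : ℝ) - (x1 i : ℝ))) - w₁ := by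
            funext o
            cases o <;>
              simp [extC, extL, bPrime, extB', hw₁def, hx2def, hyydef, hx1def,
                Pi.sub_apply, Pi.add_apply] <;> push_cast <;> ring
          rw [hv]
          exact sub_mem
            (Submodule.subset_span (Or.inl ⟨_, ⟨(x1, x2), hr, rfl⟩, rfl⟩))
            (Submodule.subset_span (Or.inr rfl))
    · rw [Submodule.span_le]
      rintro v (⟨t, ⟨r, hrm, rfl⟩, rfl⟩ | rfl)
      · by_cases hr₁ : r = (x1, x2)
        · subst hr₁
          have hv : extL σ (fun i => (((x1, x2).2 i : ℝ) - ((x1, x2).1 i : ℝ)))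
              = w₁ + (fun o => ((extC yy o : ℝ) - (bPrime (σ := σ) o : ℝ))) := by
            funext o
            cases o <;>
              simp [extC, extL, bPrime, extB', hw₁def, hx2def, hyydef, hx1def,
                Pi.sub_apply, Pi.add_apply] <;> push_cast <;> ring
          rw [hv]
          refine add_mem (Submodule.subset_span ⟨(extC x1, extB' C₂), hq₁mem, rfl⟩)
            (Submodule.subset_span ⟨(bPrime, extC yy), hq₂mem, rfl⟩)
        · have hmem : (extC r.1, extC r.2) ∈ (signFixCRN R A B p₁ p₂ C₁ C₂).reactions := by
            rw [hE₂]
            exact Finset.mem_union_left _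
              (Finset.mem_image_of_mem _ (Finset.mem_erase.mpr ⟨hr₁, hrm⟩))
          refine Submodule.subset_span ⟨(extC r.1, extC r.2), hmem, ?_⟩
          funext o; cases o <;> simp [extC, extL]
      · exact Submodule.subset_span ⟨(extC x1, extB' C₂), hq₁mem, rfl⟩
  rw [CRN.srank, CRN.srank, hspan, finrank_span_ext T₁ w₁ (by simp [hw₁def, extB', extC])]

lemma card_extC_union (W : Finset (σ → ℕ)) (P : Finset (Option σ → ℕ))
    (hP : ∀ z ∈ P, z none = 1) :
    (W.image extC ∪ P).card = W.card + P.card := by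
  have hdisj : Disjoint (W.image extC) P := by
    rw [Finset.disjoint_left]
    rintro a ha hp
    obtain ⟨w, _, rfl⟩ := Finset.mem_image.mp ha
    exact absurd (hP _ hp) (by simp [extC])
  rw [Finset.card_union_of_disjoint hdisj, Finset.card_image_of_injective _ extC_injective]

/-- One step of the sign fixing algorithm changes the deficiency `δ = n - ℓ - s`
by at most one, and never decreases it: `0 ≤ δ₂ - δ₁ ≤ 1`. -/
theorem signFixCRN_deficiency_step {d : ℕ} (N₁ : CRN (Fin d))
    (A B : Fin d) (hAB : A ≠ B)
    (p₁ p₂ p₃ p₄ : ℕ) (hp₁ : 0 < p₁) (hp₂ : 0 < p₂) (hp₃ : 0 < p₃) (hp₄ : 0 < p₄)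
    (C₁ C₂ C₃ C₄ : Fin d → ℕ)
    (hC₁ : C₁ A = 0 ∧ C₁ B = 0) (hC₂ : C₂ A = 0 ∧ C₂ B = 0)
    (hC₃ : C₃ A = 0 ∧ C₃ B = 0) (hC₄ : C₄ A = 0 ∧ C₄ B = 0)
    (hr₁ : ((fun i => mono A p₁ i + C₁ i), (fun i => mono B p₂ i + C₂ i))
      ∈ N₁.reactions)
    (hr₂ : ((fun i => mono A p₃ i + mono B p₄ i + C₃ i), C₄) ∈ N₁.reactions) :
    0 ≤ (signFixCRN N₁ A B p₁ p₂ C₁ C₂).deficiency - N₁.deficiency ∧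
    (signFixCRN N₁ A B p₁ p₂ C₁ C₂).deficiency - N₁.deficiency ≤ 1 := by
  obtain ⟨hC₁A, hC₁B⟩ := hC₁
  obtain ⟨hC₂A, hC₂B⟩ := hC₂
  by_cases hz : C₂ = fun _ => 0
  · -- C₂ = 0 case
    subst hz
    set x1 : Fin d → ℕ := fun i => mono A p₁ i + C₁ i with hx1def
    set x2 : Fin d → ℕ := fun i => mono B p₂ i + (fun _ : Fin d => 0) i with hx2def
    set yy : Fin d → ℕ := mono B p₂ with hyydef
    set N₂ := signFixCRN N₁ A B p₁ p₂ C₁ (fun _ => 0) with hN₂def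
    set Es := N₁.reactions.erase (x1, x2) with hEsdef
    set S : Finset (Fin d → ℕ) := insert x1 (Es.image Prod.fst ∪ Es.image Prod.snd) with hSdef
    have hx2yy : x2 = yy := by
      funext i; simp [hx2def, hyydef]
    have hs : N₂.srank = N₁.srank + 1 := srank_signFix N₁ A B p₁ p₂ C₁ (fun _ => 0) hr₁
    have hcomp1 : N₁.complexes = insert x2 S := complexes_eq N₁ hr₁
    have hcomp2 : N₂.complexes = (insert yy S).image extC ∪ {bPrime} := by
      have h := signFix_complexes N₁ A B p₁ p₂ C₁ (fun _ => 0)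
      rw [extB'_zero] at h
      rw [h]
      congr 1
      exact Finset.insert_eq_self.mpr (Finset.mem_singleton_self _)
    have hn1 : N₁.numComplexes = (insert x2 S).card := by
      rw [CRN.numComplexes, hcomp1]
    have hn2 : N₂.numComplexes = (insert yy S).card + 1 := by
      rw [CRN.numComplexes, hcomp2, card_extC_union _ _ ?_, Finset.card_singleton]
      intro zz hzz
      rw [Finset.mem_singleton.mp hzz]
      rfl
    have hl2 : N₂.numLinkage = ncomp (relGraph (insert yy S) (insert (x1, yy) Es)) := by
      rw [show N₂.numLinkage = ncomp (relGraph N₂.complexes N₂.reactions) from rfl]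
      exact ncomp_signFix_zero N₁ A B p₁ p₂ C₁ (by
        intro h
        have := congrFun h A
        simp [mono, hC₁A, hAB] at this
        omega)
    have hl1 : N₁.numLinkage = ncomp (relGraph (insert x2 S) (insert (x1, x2) Es)) := by
      rw [show N₁.numLinkage = ncomp (relGraph N₁.complexes N₁.reactions) from rfl, hcomp1,
        show N₁.reactions = insert (x1, x2) Es from (Finset.insert_erase hr₁).symm]
    have hll : N₁.numLinkage = N₂.numLinkage := by
      rw [hl1, hl2, hx2yy]
    have hnn : N₂.numComplexes = N₁.numComplexes + 1 := by
      rw [hn1, hn2, hx2yy]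
    rw [CRN.deficiency, CRN.deficiency]
    constructor <;> omega
  · -- C₂ ≠ 0 case
    have hbne : extB' C₂ ≠ bPrime := by
      intro h
      apply hz
      funext i
      exact congrFun h (some i)
    set x1 : Fin d → ℕ := fun i => mono A p₁ i + C₁ i with hx1def
    set x2 : Fin d → ℕ := fun i => mono B p₂ i + C₂ i with hx2def
    set yy : Fin d → ℕ := mono B p₂ with hyydef
    set N₂ := signFixCRN N₁ A B p₁ p₂ C₁ C₂ with hN₂def
    set Es := N₁.reactions.erase (x1, x2) with hEsdef
    set S : Finset (Fin d → ℕ) := insert x1 (Es.image Prod.fst ∪ Es.image Prod.snd) with hSdef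
    have hESsub : ∀ e ∈ Es, e.1 ∈ S ∧ e.2 ∈ S := by
      intro e he
      exact ⟨Finset.mem_insert_of_mem (Finset.mem_union_left _ (Finset.mem_image_of_mem _ he)),
        Finset.mem_insert_of_mem (Finset.mem_union_right _ (Finset.mem_image_of_mem _ he))⟩
    have hs : N₂.srank = N₁.srank + 1 := srank_signFix N₁ A B p₁ p₂ C₁ C₂ hr₁
    have hcomp1 : N₁.complexes = insert x2 S := complexes_eq N₁ hr₁
    have hcomp2 : N₂.complexes = (insert yy S).image extC ∪ {extB' C₂, bPrime} :=
      signFix_complexes N₁ A B p₁ p₂ C₁ C₂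
    have hn1 : N₁.numComplexes = (insert x2 S).card := by
      rw [CRN.numComplexes, hcomp1]
    have hP2 : ({extB' C₂, bPrime} : Finset (Option (Fin d) → ℕ)).card = 2 := by
      rw [Finset.card_insert_of_notMem (by rw [Finset.mem_singleton]; exact hbne),
        Finset.card_singleton]
    have hn2 : N₂.numComplexes = (insert yy S).card + 2 := by
      rw [CRN.numComplexes, hcomp2, card_extC_union _ _ ?_, hP2]
      intro zz hzz
      rcases Finset.mem_insert.mp hzz with rfl | h
      · rfl
      · rw [Finset.mem_singleton.mp h]
        rfl
    have hl2 : N₂.numLinkage = ncomp (relGraph (insert yy S) Es) := by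
      rw [show N₂.numLinkage = ncomp (relGraph N₂.complexes N₂.reactions) from rfl]
      exact ncomp_signFix_ne N₁ A B p₁ p₂ C₁ C₂ hbne
    have hl1 : N₁.numLinkage = ncomp (relGraph (insert x2 S) (insert (x1, x2) Es)) := by
      rw [show N₁.numLinkage = ncomp (relGraph N₁.complexes N₁.reactions) from rfl, hcomp1,
        show N₁.reactions = insert (x1, x2) Es from (Finset.insert_erase hr₁).symm]
    have hub : ncomp (relGraph (insert x2 S) (insert (x1, x2) Es)) ≤
        ncomp (relGraph (insert x2 S) Es) := ncomp_relGraph_insert_edge_le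
    have hlb : ncomp (relGraph (insert x2 S) Es) ≤
        ncomp (relGraph (insert x2 S) (insert (x1, x2) Es)) + 1 :=
      ncomp_relGraph_le_insert_edge
        (Finset.mem_insert_of_mem (Finset.mem_insert_self _ _)) (Finset.mem_insert_self _ _)
    have hcx : (insert x2 S).card + ncomp (relGraph S Es) =
        S.card + ncomp (relGraph (insert x2 S) Es) := by
      by_cases h : x2 ∈ S
      · rw [Finset.insert_eq_self.mpr h]
      · rw [Finset.card_insert_of_notMem h, ncomp_relGraph_insert_isolated h
          (fun e he hh => h (hh ▸ (hESsub e he).1)) (fun e he hh => h (hh ▸ (hESsub e he).2))]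
        omega
    have hcy : (insert yy S).card + ncomp (relGraph S Es) =
        S.card + ncomp (relGraph (insert yy S) Es) := by
      by_cases h : yy ∈ S
      · rw [Finset.insert_eq_self.mpr h]
      · rw [Finset.card_insert_of_notMem h, ncomp_relGraph_insert_isolated h
          (fun e he hh => h (hh ▸ (hESsub e he).1)) (fun e he hh => h (hh ▸ (hESsub e he).2))]
        omega
    rw [CRN.deficiency, CRN.deficiency]
    constructor <;> omega
end

section
/- Let Š be obtained from a d×d' matrix S by one sign fixing step at position (p, ℓ) with S_{pℓ} > 0. Then Š contains no 2×2 submatrix involving its new row d+1 or new column d'+1 whose sign pattern is, up to permutation of rows and columns, [[+,-],[-,-]]; consequently the number of such bad 2×2 submatrices of Š is strictly less than that of S. -/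
open Matrix

open scoped Classical in
/-- The number of bad 2×2 submatrices of a matrix, counted over ordered choices
of a pair of distinct rows and a pair of distinct columns. -/
noncomputable def badCount {m m' : ℕ} (M : Matrix (Fin m) (Fin m') ℝ) : ℕ :=
  (Finset.univ.filter (fun q : (Fin m × Fin m) × (Fin m' × Fin m') =>
    q.1.1 ≠ q.1.2 ∧ q.2.1 ≠ q.2.2 ∧
    BadPattern3 (M q.1.1 q.2.1) (M q.1.1 q.2.2) (M q.1.2 q.2.1) (M q.1.2 q.2.2))).card

lemma sfm_oo {d d' : ℕ} (S : Matrix (Fin d) (Fin d') ℝ) (p : Fin d) (l : Fin d')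
    {i : Fin (d+1)} {j : Fin (d'+1)} (hi : (i:ℕ) < d) (hj : (j:ℕ) < d') :
    signFixMat S p l i j =
      if (i:ℕ) = (p:ℕ) ∧ (j:ℕ) = (l:ℕ) then 0 else S ⟨i, hi⟩ ⟨j, hj⟩ := by
  simp [signFixMat, hi, hj]

lemma sfm_on {d d' : ℕ} (S : Matrix (Fin d) (Fin d') ℝ) (p : Fin d) (l : Fin d')
    {i : Fin (d+1)} {j : Fin (d'+1)} (hi : (i:ℕ) < d) (hj : ¬ (j:ℕ) < d') :
    signFixMat S p l i j = if (i:ℕ) = (p:ℕ) then S p l else 0 := by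
  simp [signFixMat, hi, hj]

lemma sfm_no {d d' : ℕ} (S : Matrix (Fin d) (Fin d') ℝ) (p : Fin d) (l : Fin d')
    {i : Fin (d+1)} {j : Fin (d'+1)} (hi : ¬ (i:ℕ) < d) (hj : (j:ℕ) < d') :
    signFixMat S p l i j = if (j:ℕ) = (l:ℕ) then 1 else 0 := by
  simp [signFixMat, hi, hj]

lemma sfm_nn {d d' : ℕ} (S : Matrix (Fin d) (Fin d') ℝ) (p : Fin d) (l : Fin d')
    {i : Fin (d+1)} {j : Fin (d'+1)} (hi : ¬ (i:ℕ) < d) (hj : ¬ (j:ℕ) < d') :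
    signFixMat S p l i j = -1 := by
  simp [signFixMat, hi, hj]

lemma bp_nz {a b c d : ℝ} (h : BadPattern3 a b c d) : a ≠ 0 ∧ b ≠ 0 ∧ c ≠ 0 ∧ d ≠ 0 := by
  rcases h with ⟨h1,h2,h3,h4⟩|⟨h1,h2,h3,h4⟩|⟨h1,h2,h3,h4⟩|⟨h1,h2,h3,h4⟩
  · exact ⟨h1.ne', h2.ne, h3.ne, h4.ne⟩
  · exact ⟨h1.ne, h2.ne', h3.ne, h4.ne⟩
  · exact ⟨h1.ne, h2.ne, h3.ne', h4.ne⟩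
  · exact ⟨h1.ne, h2.ne, h3.ne, h4.ne'⟩

lemma sfm_noNew {d d' : ℕ} (S : Matrix (Fin d) (Fin d') ℝ) (p : Fin d) (l : Fin d') :
    ∀ (i j : Fin (d + 1)) (k' l' : Fin (d' + 1)), i ≠ j → k' ≠ l' →
      (i = Fin.last d ∨ j = Fin.last d ∨ k' = Fin.last d' ∨ l' = Fin.last d') →
      ¬ BadPattern3 ((signFixMat S p l) i k') ((signFixMat S p l) i l')
          ((signFixMat S p l) j k') ((signFixMat S p l) j l') := by
  intro i j k' l' hij hkl hlast hb
  obtain ⟨hA, hB, hC, hD⟩ := bp_nz hb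
  have hij' : (i:ℕ) ≠ (j:ℕ) := fun h => hij (Fin.ext h)
  have hkl' : (k':ℕ) ≠ (l':ℕ) := fun h => hkl (Fin.ext h)
  have hlast' : (i:ℕ) = d ∨ (j:ℕ) = d ∨ (k':ℕ) = d' ∨ (l':ℕ) = d' := by
    rcases hlast with h|h|h|h
    exacts [Or.inl (by rw [h]; rfl), Or.inr (Or.inl (by rw [h]; rfl)),
      Or.inr (Or.inr (Or.inl (by rw [h]; rfl))), Or.inr (Or.inr (Or.inr (by rw [h]; rfl)))]
  have hib := i.isLt; have hjb := j.isLt; have hkb := k'.isLt; have hlb := l'.isLt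
  by_cases hi : (i:ℕ) < d <;> by_cases hj : (j:ℕ) < d <;>
    by_cases hk : (k':ℕ) < d' <;> by_cases hl : (l':ℕ) < d'
  -- 1: all old
  · exact absurd hlast' (by omega)
  -- 2: i,j old; k' old, l' new
  · by_cases hip : (i:ℕ) = (p:ℕ)
    · exact hD (by rw [sfm_on S p l hj hl]; simp [show ¬(j:ℕ) = (p:ℕ) by omega])
    · exact hB (by rw [sfm_on S p l hi hl]; simp [hip])
  -- 3: i,j old; k' new, l' old
  · by_cases hip : (i:ℕ) = (p:ℕ)
    · exact hC (by rw [sfm_on S p l hj hk]; simp [show ¬(j:ℕ) = (p:ℕ) by omega])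
    · exact hA (by rw [sfm_on S p l hi hk]; simp [hip])
  -- 4: i,j old; k',l' new : impossible
  · exact absurd hkl' (by omega)
  -- 5: i old, j new; k',l' old
  · by_cases hkL : (k':ℕ) = (l:ℕ)
    · exact hD (by rw [sfm_no S p l hj hl]; simp [show ¬(l':ℕ) = (l:ℕ) by omega])
    · exact hC (by rw [sfm_no S p l hj hk]; simp [hkL])
  -- 6: i old, j new; k' old, l' new
  · by_cases hip : (i:ℕ) = (p:ℕ)
    · by_cases hkL : (k':ℕ) = (l:ℕ)
      · exact hA (by rw [sfm_oo S p l hi hk]; simp [hip, hkL])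
      · exact hC (by rw [sfm_no S p l hj hk]; simp [hkL])
    · exact hB (by rw [sfm_on S p l hi hl]; simp [hip])
  -- 7: i old, j new; k' new, l' old
  · by_cases hip : (i:ℕ) = (p:ℕ)
    · by_cases hll : (l':ℕ) = (l:ℕ)
      · exact hB (by rw [sfm_oo S p l hi hl]; simp [hip, hll])
      · exact hD (by rw [sfm_no S p l hj hl]; simp [hll])
    · exact hA (by rw [sfm_on S p l hi hk]; simp [hip])
  -- 8: i old, j new; k',l' new : impossible
  · exact absurd hkl' (by omega)
  -- 9: i new, j old; k',l' old
  · by_cases hkL : (k':ℕ) = (l:ℕ)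
    · exact hB (by rw [sfm_no S p l hi hl]; simp [show ¬(l':ℕ) = (l:ℕ) by omega])
    · exact hA (by rw [sfm_no S p l hi hk]; simp [hkL])
  -- 10: i new, j old; k' old, l' new
  · by_cases hjp : (j:ℕ) = (p:ℕ)
    · by_cases hkL : (k':ℕ) = (l:ℕ)
      · exact hC (by rw [sfm_oo S p l hj hk]; simp [hjp, hkL])
      · exact hA (by rw [sfm_no S p l hi hk]; simp [hkL])
    · exact hD (by rw [sfm_on S p l hj hl]; simp [hjp])
  -- 11: i new, j old; k' new, l' old
  · by_cases hjp : (j:ℕ) = (p:ℕ)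
    · by_cases hll : (l':ℕ) = (l:ℕ)
      · exact hD (by rw [sfm_oo S p l hj hl]; simp [hjp, hll])
      · exact hB (by rw [sfm_no S p l hi hl]; simp [hll])
    · exact hC (by rw [sfm_on S p l hj hk]; simp [hjp])
  -- 12: i new, j old; k',l' new : impossible
  · exact absurd hkl' (by omega)
  -- 13-16: i,j new : impossible
  all_goals exact absurd hij' (by omega)

lemma card_lt_aux {A B : Type*} [DecidableEq A] [DecidableEq B] {s : Finset A} {t : Finset B}
    {f : A → B} {x : A} (hsub : t ⊆ (s.erase x).image f) (hx : x ∈ s) :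
    t.card < s.card :=
  lt_of_le_of_lt (le_trans (Finset.card_le_card hsub) Finset.card_image_le)
    (Finset.card_erase_lt_of_mem hx)


/-- After one sign fixing step targeting a bad submatrix with positive entry at
`(p, l)`, no bad 2×2 submatrix of `Š` involves the new row `d+1` or the new
column `d'+1`; consequently `Š` has strictly fewer bad submatrices than `S`. -/
theorem signFix_no_new_bad_submatrix {d d' : ℕ} (S : Matrix (Fin d) (Fin d') ℝ)
    (p : Fin d) (l : Fin d') (hpl : 0 < S p l)
    (hbad : ∃ (i : Fin d) (k : Fin d'),
      i ≠ p ∧ k ≠ l ∧ S i l < 0 ∧ S p k < 0 ∧ S i k < 0) :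
    (∀ (i j : Fin (d + 1)) (k' l' : Fin (d' + 1)), i ≠ j → k' ≠ l' →
      (i = Fin.last d ∨ j = Fin.last d ∨ k' = Fin.last d' ∨ l' = Fin.last d') →
      ¬ BadPattern3 ((signFixMat S p l) i k') ((signFixMat S p l) i l')
          ((signFixMat S p l) j k') ((signFixMat S p l) j l')) ∧
    badCount (signFixMat S p l) < badCount S := by
  refine ⟨sfm_noNew S p l, ?_⟩
  classical
  obtain ⟨i₀, k₀, hi₀p, hk₀l, h1, h2, h3⟩ := hbad
  set E : (Fin d × Fin d) × (Fin d' × Fin d') →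
      (Fin (d+1) × Fin (d+1)) × (Fin (d'+1) × Fin (d'+1)) :=
    fun q => ((q.1.1.castSucc, q.1.2.castSucc), (q.2.1.castSucc, q.2.2.castSucc)) with hE
  set u₀ : (Fin d × Fin d) × (Fin d' × Fin d') := ((p, i₀), (l, k₀)) with hu₀def
  have hEu₀A : signFixMat S p l (E u₀).1.1 (E u₀).2.1 = 0 := by
    rw [hE, hu₀def]
    rw [sfm_oo S p l (by simpa using p.isLt) (by simpa using l.isLt)]
    simp
  unfold badCount
  refine card_lt_aux (x := u₀) (f := E) ?_ ?_
  · intro q hq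
    obtain ⟨⟨a, b⟩, c, e⟩ := q
    simp only [Finset.mem_filter, Finset.mem_univ, true_and] at hq
    obtain ⟨hq1, hq2, hq3⟩ := hq
    obtain ⟨nA, nB, nC, nD⟩ := bp_nz hq3
    have h11 : a ≠ Fin.last d := fun h => sfm_noNew S p l _ _ _ _ hq1 hq2 (Or.inl h) hq3
    have h12 : b ≠ Fin.last d := fun h => sfm_noNew S p l _ _ _ _ hq1 hq2 (Or.inr (Or.inl h)) hq3
    have h21 : c ≠ Fin.last d' := fun h =>
      sfm_noNew S p l _ _ _ _ hq1 hq2 (Or.inr (Or.inr (Or.inl h))) hq3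
    have h22 : e ≠ Fin.last d' := fun h =>
      sfm_noNew S p l _ _ _ _ hq1 hq2 (Or.inr (Or.inr (Or.inr h))) hq3
    have v11 : (a:ℕ) < d := by
      have := a.isLt
      have : (a:ℕ) ≠ d := fun h => h11 (Fin.ext (by simp [h])); omega
    have v12 : (b:ℕ) < d := by
      have := b.isLt
      have : (b:ℕ) ≠ d := fun h => h12 (Fin.ext (by simp [h])); omega
    have v21 : (c:ℕ) < d' := by
      have := c.isLt
      have : (c:ℕ) ≠ d' := fun h => h21 (Fin.ext (by simp [h])); omega
    have v22 : (e:ℕ) < d' := by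
      have := e.isLt
      have : (e:ℕ) ≠ d' := fun h => h22 (Fin.ext (by simp [h])); omega
    set u : (Fin d × Fin d) × (Fin d' × Fin d') :=
      ((⟨a, v11⟩, ⟨b, v12⟩), (⟨c, v21⟩, ⟨e, v22⟩)) with hudef
    have hqu : ((a, b), (c, e)) = E u := by
      simp [hE, hudef, Prod.ext_iff, Fin.ext_iff]
    -- the four entries avoid (p, l)
    have cA : ¬((a:ℕ) = (p:ℕ) ∧ (c:ℕ) = (l:ℕ)) := fun hc =>
      nA (by rw [sfm_oo S p l v11 v21, if_pos hc])
    have cB : ¬((a:ℕ) = (p:ℕ) ∧ (e:ℕ) = (l:ℕ)) := fun hc =>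
      nB (by rw [sfm_oo S p l v11 v22, if_pos hc])
    have cC : ¬((b:ℕ) = (p:ℕ) ∧ (c:ℕ) = (l:ℕ)) := fun hc =>
      nC (by rw [sfm_oo S p l v12 v21, if_pos hc])
    have cD : ¬((b:ℕ) = (p:ℕ) ∧ (e:ℕ) = (l:ℕ)) := fun hc =>
      nD (by rw [sfm_oo S p l v12 v22, if_pos hc])
    have eA : signFixMat S p l a c = S ⟨a, v11⟩ ⟨c, v21⟩ := by
      rw [sfm_oo S p l v11 v21, if_neg cA]
    have eB : signFixMat S p l a e = S ⟨a, v11⟩ ⟨e, v22⟩ := by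
      rw [sfm_oo S p l v11 v22, if_neg cB]
    have eC : signFixMat S p l b c = S ⟨b, v12⟩ ⟨c, v21⟩ := by
      rw [sfm_oo S p l v12 v21, if_neg cC]
    have eD : signFixMat S p l b e = S ⟨b, v12⟩ ⟨e, v22⟩ := by
      rw [sfm_oo S p l v12 v22, if_neg cD]
    have hu : u ∈ Finset.univ.filter (fun q : (Fin d × Fin d) × (Fin d' × Fin d') =>
        q.1.1 ≠ q.1.2 ∧ q.2.1 ≠ q.2.2 ∧
        BadPattern3 (S q.1.1 q.2.1) (S q.1.1 q.2.2) (S q.1.2 q.2.1) (S q.1.2 q.2.2)) := by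
      simp only [Finset.mem_filter, Finset.mem_univ, true_and]
      refine ⟨?_, ?_, ?_⟩
      · simp only [hudef, ne_eq, Fin.mk.injEq]
        exact fun h => hq1 (Fin.ext h)
      · simp only [hudef, ne_eq, Fin.mk.injEq]
        exact fun h => hq2 (Fin.ext h)
      · rw [eA, eB, eC, eD] at hq3
        exact hq3
    have hune : u ≠ u₀ := by
      intro h
      rw [hudef, hu₀def] at h
      simp only [Prod.mk.injEq, Fin.ext_iff] at h
      exact cA ⟨h.1.1, h.2.1⟩
    refine Finset.mem_image.mpr ⟨u, Finset.mem_erase.mpr ⟨hune, hu⟩, hqu.symm⟩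
  · simp only [Finset.mem_filter, Finset.mem_univ, true_and, hu₀def]
    refine ⟨fun h => hi₀p (Fin.ext (congrArg Fin.val h)).symm,
      fun h => hk₀l (Fin.ext (congrArg Fin.val h)).symm, ?_⟩
    exact Or.inl ⟨hpl, h2, h1, h3⟩
end
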